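/- arXiv:2504.18908 — 6 statements merged into one kernel-verified Lean document; each statement's English description precedes it below -/
import Mathlib

section
/- For a polynomial f in Z_p[x_1,...,x_d], let N_m be the number of solutions of f ≡ 0 in (Z/p^m Z)^d, let P_f(t) = Σ_{m≥0} N_m (p^{-d} t)^m, and let Z_f(s) = ∫_{Z_p^d} |f(x)|_p^s dμ with t = p^{-s}. Then P_f(t) = (1 - t Z_f(s)) / (1 - t). -/
open MeasureTheory
open scoped ENNReal NNReal

variable {p : ℕ} [Fact p.Prime]

noncomputable instance : MeasurableSpace ℤ_[p] := borel _
instance : BorelSpace ℤ_[p] := ⟨rfl⟩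

namespace PoincareAux
open MvPolynomial

lemma measurableSet_fiber (m : ℕ) (y : ℤ_[p]) :
    MeasurableSet (PadicInt.toZModPow (p := p) m ⁻¹' {PadicInt.toZModPow m y}) := by
  have h : (PadicInt.toZModPow (p := p) m) ⁻¹' {PadicInt.toZModPow m y}
      = {x | ‖x - y‖ ≤ (p : ℝ) ^ (-m : ℤ)} := by
    ext x
    simp only [Set.mem_preimage, Set.mem_singleton_iff, Set.mem_setOf_eq]
    rw [PadicInt.norm_le_pow_iff_mem_span_pow, ← PadicInt.ker_toZModPow, RingHom.mem_ker,
      map_sub, sub_eq_zero]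
  rw [h]
  exact measurableSet_le
    ((continuous_norm.comp (continuous_id.sub continuous_const)).measurable) measurable_const

lemma measurable_toZModPow (m : ℕ) : Measurable (PadicInt.toZModPow (p := p) m) :=
  measurable_to_countable fun y => measurableSet_fiber m y

variable {d : ℕ}

noncomputable def phi (m : ℕ) : (Fin d → ℤ_[p]) → (Fin d → ZMod (p ^ m)) :=
  fun x i => PadicInt.toZModPow m (x i)

lemma measurable_phi (m : ℕ) : Measurable (phi (p := p) (d := d) m) :=
  measurable_pi_lambda _ fun i => (measurable_toZModPow m).comp (measurable_pi_apply i)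

variable (μ : Measure (Fin d → ℤ_[p])) [IsProbabilityMeasure μ] [μ.IsAddLeftInvariant]

omit [IsProbabilityMeasure μ] in
lemma measure_fiber (m : ℕ) (z : Fin d → ZMod (p ^ m)) :
    μ (phi m ⁻¹' {z}) = μ (phi m ⁻¹' {0}) := by
  set y : Fin d → ℤ_[p] := fun i => (((z i).val : ℕ) : ℤ_[p]) with hy'
  have hy : phi (p := p) m y = z := funext fun i => by
    simp [phi, hy', ZMod.natCast_val, ZMod.cast_id]
  have key : phi (p := p) m ⁻¹' {z} = ((-y) + ·) ⁻¹' (phi m ⁻¹' {0}) := by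
    ext x
    simp only [Set.mem_preimage, Set.mem_singleton_iff]
    have hφ : phi (p := p) m (-y + x) = -z + phi m x := funext fun i => by
      show PadicInt.toZModPow m (-(y i) + x i) = -(z i) + PadicInt.toZModPow m (x i)
      rw [map_add, map_neg, ← congrFun hy i]
      rfl
    rw [hφ]
    constructor
    · intro h; rw [h]; simp
    · intro h; exact (neg_add_eq_zero.mp h).symm
  rw [key, measure_preimage_add]

lemma measure_fiber_zero (m : ℕ) :
    μ (phi (p := p) (d := d) m ⁻¹' {0}) = ((p : ℝ≥0∞) ^ (m * d))⁻¹ := by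
  have hdisj : Pairwise (Function.onFun Disjoint
      fun z : Fin d → ZMod (p ^ m) => phi (p := p) m ⁻¹' {z}) := by
    intro a b hab
    refine Set.disjoint_left.mpr fun x hxa hxb => hab ?_
    simp only [Set.mem_preimage, Set.mem_singleton_iff] at hxa hxb
    rw [← hxa, ← hxb]
  have huniv : ⋃ z : Fin d → ZMod (p ^ m), phi (p := p) (d := d) m ⁻¹' {z} = Set.univ := by
    ext x; simp
  have h1 : (1 : ℝ≥0∞) = ∑' z : Fin d → ZMod (p ^ m), μ (phi m ⁻¹' {z}) := by
    rw [← measure_univ (μ := μ), ← huniv,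
      measure_iUnion hdisj fun z => measurable_phi m (measurableSet_singleton z)]
  rw [tsum_fintype] at h1
  simp only [measure_fiber μ m] at h1
  rw [Finset.sum_const, Finset.card_univ, nsmul_eq_mul] at h1
  have hcard : (Fintype.card (Fin d → ZMod (p ^ m)) : ℝ≥0∞) = (p : ℝ≥0∞) ^ (m * d) := by
    rw [Fintype.card_fun, ZMod.card, Fintype.card_fin]
    push_cast
    rw [← pow_mul]
  rw [hcard] at h1
  have hne : (p : ℝ≥0∞) ^ (m * d) ≠ 0 := by
    apply pow_ne_zero
    simp [(Fact.out : p.Prime).ne_zero]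
  have htop : (p : ℝ≥0∞) ^ (m * d) ≠ ⊤ := by
    exact ENNReal.pow_ne_top (by simp)
  have := congrArg (fun x => ((p : ℝ≥0∞) ^ (m * d))⁻¹ * x) h1
  simpa [mul_one, ← mul_assoc, ENNReal.inv_mul_cancel hne htop] using this.symm

lemma measure_sol (m : ℕ) (Z : Set (Fin d → ZMod (p ^ m))) :
    μ (phi (p := p) m ⁻¹' Z) = (Nat.card Z : ℝ≥0∞) / (p : ℝ≥0∞) ^ (m * d) := by
  classical
  have hsplit : phi (p := p) (d := d) m ⁻¹' Z = ⋃ z ∈ Z.toFinset, phi m ⁻¹' {z} := by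
    ext x; simp
  rw [hsplit, measure_biUnion_finset ?_ fun z _ => measurable_phi m (measurableSet_singleton z)]
  · simp only [measure_fiber μ m, measure_fiber_zero μ m]
    rw [Finset.sum_const, Set.toFinset_card, nsmul_eq_mul, div_eq_mul_inv]
    congr 1
    rw [Nat.card_eq_fintype_card]
  · intro a _ b _ hab
    refine Set.disjoint_left.mpr fun x hxa hxb => hab ?_
    simp only [Set.mem_preimage, Set.mem_singleton_iff] at hxa hxb
    rw [← hxa, ← hxb]

lemma ball_eq (f : MvPolynomial (Fin d) ℤ_[p]) (m : ℕ) :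
    {x : Fin d → ℤ_[p] | ‖eval x f‖ ≤ (p : ℝ) ^ (-m : ℤ)}
      = phi (p := p) m ⁻¹' {z | eval z (map (PadicInt.toZModPow m) f) = 0} := by
  ext x
  simp only [Set.mem_setOf_eq, Set.mem_preimage]
  have key : eval (phi (p := p) m x) (map (PadicInt.toZModPow m) f)
      = PadicInt.toZModPow m (eval x f) := by
    rw [eval_map, show phi (p := p) m x = (PadicInt.toZModPow m) ∘ x from rfl,
      ← eval₂_id (g := x) f, eval₂_comp_left, RingHom.comp_id]
  rw [key, PadicInt.norm_le_pow_iff_mem_span_pow, ← PadicInt.ker_toZModPow, RingHom.mem_ker]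

end PoincareAux

/-- `P_f(t) = (1 - t Z_f(s))/(1 - t)`, where `N_m` is the number of zeros of `f` in
`(ℤ/p^m ℤ)^d`, `t = p^{-s}`, and `Z_f(s) = ∫_{ℤ_p^d} |f(x)|_p^s dμ` with `μ` the Haar
measure normalized so that `μ(ℤ_p^d) = 1`. -/
theorem poincare_series_eq (d : ℕ) (μ : Measure (Fin d → ℤ_[p]))
    [IsProbabilityMeasure μ] [μ.IsAddLeftInvariant]
    (f : MvPolynomial (Fin d) ℤ_[p]) (s : ℝ) (hs : 0 < s) :
    ∑' m : ℕ, (Nat.card {x : Fin d → ZMod (p ^ m) //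
        MvPolynomial.eval x (MvPolynomial.map (PadicInt.toZModPow m) f) = 0} : ℝ) *
        ((p : ℝ) ^ (-(d : ℝ)) * (p : ℝ) ^ (-s)) ^ m =
      (1 - (p : ℝ) ^ (-s) * ∫ x, ‖MvPolynomial.eval x f‖ ^ s ∂μ) /
        (1 - (p : ℝ) ^ (-s)) := by
  classical
  have hpp : p.Prime := Fact.out
  have hp1 : (1 : ℝ) < p := by exact_mod_cast hpp.one_lt
  have hp0 : (0 : ℝ) < p := lt_trans one_pos hp1
  set t : ℝ := (p : ℝ) ^ (-s) with ht_def
  have ht0 : 0 < t := Real.rpow_pos_of_pos hp0 _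
  have ht1 : t < 1 := Real.rpow_lt_one_of_one_lt_of_neg hp1 (neg_lt_zero.mpr hs)
  set B : ℕ → Set (Fin d → ℤ_[p]) :=
    fun m => {x | ‖MvPolynomial.eval x f‖ ≤ (p : ℝ) ^ (-m : ℤ)} with hB_def
  have hBmeas : ∀ m, MeasurableSet (B m) := fun m =>
    measurableSet_le ((MvPolynomial.continuous_eval f).norm.measurable) measurable_const
  have hBsub : ∀ m, B (m + 1) ⊆ B m := by
    intro m x hx
    simp only [hB_def, Set.mem_setOf_eq] at hx ⊢
    refine le_trans hx (zpow_le_zpow_right₀ hp1.le ?_)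
    omega
  set c : ℕ → ℝ := fun m => (μ (B m)).toReal with hc_def
  have hc0 : ∀ m, 0 ≤ c m := fun m => ENNReal.toReal_nonneg
  have hc1 : ∀ m, c m ≤ 1 := fun m => by
    calc c m ≤ (1 : ℝ≥0∞).toReal := ENNReal.toReal_mono ENNReal.one_ne_top prob_le_one
    _ = 1 := by simp
  have hc00 : c 0 = 1 := by
    have hu : B 0 = Set.univ := by
      ext x; simp [hB_def, PadicInt.norm_le_one]
    simp [hc_def, hu]
  have hcval : ∀ m : ℕ, (Nat.card {x : Fin d → ZMod (p ^ m) //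
        MvPolynomial.eval x (MvPolynomial.map (PadicInt.toZModPow m) f) = 0} : ℝ)
      * ((p : ℝ) ^ (-(d : ℝ))) ^ m = c m := by
    intro m
    have h1 : μ (B m) = (Nat.card {x : Fin d → ZMod (p ^ m) //
        MvPolynomial.eval x (MvPolynomial.map (PadicInt.toZModPow m) f) = 0} : ℝ≥0∞)
        / (p : ℝ≥0∞) ^ (m * d) := by
      simp only [hB_def]
      rw [PoincareAux.ball_eq f m, PoincareAux.measure_sol μ m]
      rfl
    have ha : ((p : ℝ) ^ (-(d : ℝ))) ^ m = ((p : ℝ) ^ (m * d))⁻¹ := by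
      rw [Real.rpow_neg hp0.le, Real.rpow_natCast, inv_pow, ← pow_mul, mul_comm d m]
    rw [hc_def]
    simp only [h1]
    rw [ENNReal.toReal_div, ENNReal.toReal_natCast, ENNReal.toReal_pow, ENNReal.toReal_natCast,
      ha, div_eq_mul_inv]
  have hL : ∀ m : ℕ, (Nat.card {x : Fin d → ZMod (p ^ m) //
        MvPolynomial.eval x (MvPolynomial.map (PadicInt.toZModPow m) f) = 0} : ℝ) *
        ((p : ℝ) ^ (-(d : ℝ)) * t) ^ m = c m * t ^ m := by
    intro m
    rw [mul_pow, ← mul_assoc, hcval m]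
  rw [tsum_congr hL]
  -- pointwise expansion of the integrand
  have hpoint : ∀ x, ‖MvPolynomial.eval x f‖ ^ s
      = ∑' k : ℕ, ((B k \ B (k + 1)).indicator (fun _ => t ^ k)) x := by
    intro x
    by_cases hy : MvPolynomial.eval x f = 0
    · rw [hy, norm_zero, Real.zero_rpow hs.ne']
      have hzero : ∀ k : ℕ, ((B k \ B (k + 1)).indicator (fun _ => t ^ k)) x = 0 := by
        intro k
        apply Set.indicator_of_notMem
        intro hk
        apply hk.2
        simp only [hB_def, Set.mem_setOf_eq, hy, norm_zero]
        positivity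
      rw [tsum_congr hzero, tsum_zero]
    · set v : ℕ := (MvPolynomial.eval x f).valuation with hv_def
      have hval : ((MvPolynomial.eval x f).valuation : ℤ) = (v : ℤ) :=
        rfl
      have hnorm : ‖MvPolynomial.eval x f‖ = (p : ℝ) ^ (-(v : ℤ)) := by
        rw [PadicInt.norm_eq_zpow_neg_valuation hy]
      have hmem : ∀ k : ℕ, x ∈ B k ↔ k ≤ v := by
        intro k
        simp only [hB_def, Set.mem_setOf_eq, hnorm]
        rw [zpow_le_zpow_iff_right₀ hp1]
        omega
      have hdiff : ∀ k : ℕ, x ∈ B k \ B (k + 1) ↔ k = v := by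
        intro k
        rw [Set.mem_diff, hmem k, hmem (k + 1)]
        omega
      rw [tsum_eq_single v fun k hk => Set.indicator_of_notMem (fun h => hk ((hdiff k).mp h)) _]
      rw [Set.indicator_of_mem ((hdiff v).mpr rfl)]
      rw [hnorm, ht_def, ← Real.rpow_intCast (p : ℝ) (-(v : ℤ)),
        ← Real.rpow_natCast ((p : ℝ) ^ (-s)) v, ← Real.rpow_mul hp0.le, ← Real.rpow_mul hp0.le]
      congr 1
      push_cast
      ring
  have hAmeas : ∀ k : ℕ, MeasurableSet (B k \ B (k + 1)) :=
    fun k => (hBmeas k).diff (hBmeas (k + 1))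
  have htn : ‖t‖₊ < 1 := by
    rw [← NNReal.coe_lt_coe, coe_nnnorm, NNReal.coe_one, Real.norm_eq_abs, abs_of_pos ht0]
    exact ht1
  have hint : ∫ x, ‖MvPolynomial.eval x f‖ ^ s ∂μ = ∑' k : ℕ, t ^ k * (c k - c (k + 1)) := by
    simp_rw [hpoint]
    rw [MeasureTheory.integral_tsum
      (fun k => (measurable_const.indicator (hAmeas k)).aestronglyMeasurable) ?_]
    · refine tsum_congr fun k => ?_
      rw [MeasureTheory.integral_indicator_const _ (hAmeas k), measureReal_def,
        measure_diff (hBsub k) (hBmeas (k + 1)).nullMeasurableSet (measure_ne_top μ _),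
        ENNReal.toReal_sub_of_le (measure_mono (hBsub k)) (measure_ne_top μ _)]
      simp only [smul_eq_mul, hc_def]
      ring
    · refine ne_top_of_le_ne_top
        (ENNReal.tsum_coe_ne_top_iff_summable.mpr
          (by simpa [nnnorm_pow] using NNReal.summable_geometric htn))
        (ENNReal.tsum_le_tsum fun k => ?_)
      have hind : ∀ a, (‖(B k \ B (k + 1)).indicator (fun _ => t ^ k) a‖₊ : ℝ≥0∞)
          = (B k \ B (k + 1)).indicator (fun _ => ((‖t ^ k‖₊ : ℝ≥0) : ℝ≥0∞)) a := by
        intro a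
        by_cases ha : a ∈ B k \ B (k + 1) <;>
          simp [Set.indicator_of_mem, Set.indicator_of_notMem, ha]
      calc ∫⁻ a, ‖(B k \ B (k + 1)).indicator (fun _ => t ^ k) a‖₊ ∂μ
          = ∫⁻ a, (B k \ B (k + 1)).indicator (fun _ => ((‖t ^ k‖₊ : ℝ≥0) : ℝ≥0∞)) a ∂μ :=
            lintegral_congr hind
        _ = ((‖t ^ k‖₊ : ℝ≥0) : ℝ≥0∞) * μ (B k \ B (k + 1)) := by
            rw [lintegral_indicator (hAmeas k), setLIntegral_const]
        _ ≤ ((‖t ^ k‖₊ : ℝ≥0) : ℝ≥0∞) * 1 :=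
            mul_le_mul_right prob_le_one _
        _ = ((‖t ^ k‖₊ : ℝ≥0) : ℝ≥0∞) := mul_one _
        _ = ((‖t‖₊ ^ k : ℝ≥0) : ℝ≥0∞) := by rw [nnnorm_pow]
  rw [hint]
  -- summability and series algebra
  have hgeo : Summable (fun m : ℕ => t ^ m) := summable_geometric_of_lt_one ht0.le ht1
  have hsum1 : Summable (fun m : ℕ => c m * t ^ m) := by
    refine Summable.of_nonneg_of_le
      (fun m => mul_nonneg (hc0 m) (pow_nonneg ht0.le m)) (fun m => ?_) hgeo
    calc c m * t ^ m ≤ 1 * t ^ m := mul_le_mul_of_nonneg_right (hc1 m) (pow_nonneg ht0.le m)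
    _ = t ^ m := one_mul _
  have hsum2 : Summable (fun m : ℕ => c (m + 1) * t ^ m) := by
    refine Summable.of_nonneg_of_le
      (fun m => mul_nonneg (hc0 _) (pow_nonneg ht0.le m)) (fun m => ?_) hgeo
    calc c (m + 1) * t ^ m ≤ 1 * t ^ m :=
      mul_le_mul_of_nonneg_right (hc1 _) (pow_nonneg ht0.le m)
    _ = t ^ m := one_mul _
  set S := ∑' m : ℕ, c m * t ^ m with hS_def
  set S2 := ∑' m : ℕ, c (m + 1) * t ^ m with hS2_def
  have hS2 : t * S2 = S - 1 := by
    have h0 : S = c 0 * t ^ 0 + ∑' m : ℕ, c (m + 1) * t ^ (m + 1) := hsum1.tsum_eq_zero_add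
    have h1 : (∑' m : ℕ, c (m + 1) * t ^ (m + 1)) = t * S2 := by
      rw [hS2_def, ← tsum_mul_left]
      exact tsum_congr fun m => by ring
    rw [h1, hc00] at h0
    simp only [pow_zero, one_mul] at h0
    linarith
  have hZ : (∑' k : ℕ, t ^ k * (c k - c (k + 1))) = S - S2 := by
    rw [hS_def, hS2_def, ← Summable.tsum_sub hsum1 hsum2]
    exact tsum_congr fun k => by ring
  rw [hZ, eq_div_iff (by linarith : (1 : ℝ) - t ≠ 0)]
  linear_combination -hS2
end

section
/- For an odd prime p, Igusa's local zeta function of f(x_2, x_3) = x_3^2 − x_2^2 over Z_p equals Z_f(s) = ((1 − p^{-1}) / (1 − p^{-1-s}))^2. -/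
open MeasureTheory

variable {p : ℕ} [Fact p.Prime]

/-- Uniqueness of invariant probability measures on a compact additive group. -/
lemma addHaar_prob_unique {G : Type*} [AddGroup G] [TopologicalSpace G] [IsTopologicalAddGroup G]
    [CompactSpace G] [MeasurableSpace G] [BorelSpace G] (μ₁ μ₂ : Measure G)
    [IsProbabilityMeasure μ₁] [IsProbabilityMeasure μ₂]
    [μ₁.IsAddLeftInvariant] [μ₂.IsAddLeftInvariant] : μ₁ = μ₂ := by
  have h1 : μ₁.IsAddHaarMeasure := Measure.isAddHaarMeasure_of_isCompact_nonempty_interior μ₁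
    Set.univ isCompact_univ (by simp) (by simp) (by simp)
  have h2 : μ₂.IsAddHaarMeasure := Measure.isAddHaarMeasure_of_isCompact_nonempty_interior μ₂
    Set.univ isCompact_univ (by simp) (by simp) (by simp)
  exact Measure.isAddHaarMeasure_eq_of_isProbabilityMeasure μ₁ μ₂

lemma two_isUnit_padic (hp : p ≠ 2) : IsUnit (2 : ℤ_[p]) := by
  by_contra h
  rw [PadicInt.not_isUnit_iff] at h
  have h2 := (PadicInt.norm_int_lt_one_iff_dvd 2).mp (by exact_mod_cast h)
  have hp2 : (p : ℤ) ∣ 2 := by simpa using h2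
  have hle := Int.le_of_dvd (by norm_num) hp2
  have h3 := (Fact.out : p.Prime).two_le.lt_of_ne (Ne.symm hp)
  omega

lemma ball_meas (ν : Measure ℤ_[p]) [IsProbabilityMeasure ν] [ν.IsAddLeftInvariant] (n : ℕ) :
    ν {x : ℤ_[p] | ‖x‖ ≤ (p:ℝ) ^ (-(n:ℤ))} = ((p : ENNReal) ^ n)⁻¹ := by
  haveI : NeZero (p ^ n) := ⟨pow_ne_zero n (Fact.out : p.Prime).ne_zero⟩
  set E : Set ℤ_[p] := {x : ℤ_[p] | ‖x‖ ≤ (p:ℝ) ^ (-(n:ℤ))} with hE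
  have hEmeas : MeasurableSet E := by
    have : E = Metric.closedBall 0 ((p:ℝ) ^ (-(n:ℤ))) := by
      ext x; simp [E, Metric.mem_closedBall, dist_eq_norm]
    rw [this]; exact measurableSet_closedBall
  set K : ZMod (p ^ n) → Set ℤ_[p] := fun a => (PadicInt.toZModPow n) ⁻¹' {a} with hK
  have key : ∀ a : ZMod (p ^ n), K a = (fun x : ℤ_[p] => -((a.val : ℤ_[p])) + x) ⁻¹' E := by
    intro a
    have hcast : PadicInt.toZModPow n ((a.val : ℤ_[p])) = a := by
      rw [map_natCast]; exact ZMod.natCast_rightInverse a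
    ext x
    have : PadicInt.toZModPow n x = a ↔ ‖x - (a.val : ℤ_[p])‖ ≤ (p:ℝ) ^ (-(n:ℤ)) := by
      rw [PadicInt.norm_le_pow_iff_mem_span_pow, ← PadicInt.ker_toZModPow, RingHom.mem_ker,
        map_sub, hcast, sub_eq_zero]
    simpa [K, E, neg_add_eq_sub] using this
  have hmeasK : ∀ a, MeasurableSet (K a) := fun a => by
    rw [key a]; exact hEmeas.preimage (measurable_const_add _)
  have hνK : ∀ a, ν (K a) = ν E := fun a => by
    rw [key a]; exact measure_preimage_add ν _ E
  have hdisj : Pairwise (Function.onFun Disjoint K) := fun a b hab => by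
    simp only [Function.onFun, K, Set.disjoint_left]
    intro x hx hx'
    simp only [Set.mem_preimage, Set.mem_singleton_iff] at hx hx'
    exact hab (hx ▸ hx'.symm ▸ rfl)
  have hcover : (⋃ a, K a) = Set.univ := by
    ext x; simp [K]
  have htot : (1 : ENNReal) = ∑' a : ZMod (p ^ n), ν (K a) := by
    rw [← measure_iUnion hdisj hmeasK, hcover, measure_univ]
  rw [tsum_fintype] at htot
  simp only [hνK, Finset.sum_const, Finset.card_univ, ZMod.card, nsmul_eq_mul] at htot
  have hpn : ((p ^ n : ℕ) : ENNReal) ≠ 0 := by exact_mod_cast (NeZero.ne (p ^ n))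
  have hpn' : ((p ^ n : ℕ) : ENNReal) ≠ ⊤ := ENNReal.natCast_ne_top _
  have hfin : ν E = (((p ^ n : ℕ) : ENNReal))⁻¹ := by
    have := congrArg (((p ^ n : ℕ) : ENNReal)⁻¹ * ·) htot
    rw [← mul_assoc, ENNReal.inv_mul_cancel hpn hpn', one_mul, mul_one] at this
    exact this.symm
  rw [hfin]; push_cast; ring

lemma integral_norm_rpow (ν : Measure ℤ_[p]) [IsProbabilityMeasure ν] [ν.IsAddLeftInvariant]
    (s : ℝ) (hs : 0 < s) :
    ∫ x : ℤ_[p], ‖x‖ ^ s ∂ν = (1 - (p:ℝ)⁻¹) / (1 - (p:ℝ) ^ (-1 - s)) := by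
  have hp1 : (1:ℝ) < p := by exact_mod_cast (Fact.out : p.Prime).one_lt
  have hppos : (0:ℝ) < p := lt_trans one_pos hp1
  set f : ℤ_[p] → ℝ := fun x => ‖x‖ ^ s with hf
  have hfc : Continuous f := by
    have : Continuous fun t : ℝ => t ^ s :=
      continuous_iff_continuousAt.mpr fun x => Real.continuousAt_rpow_const x s (Or.inr hs.le)
    exact this.comp continuous_norm
  have hfi : Integrable f ν :=
    hfc.integrable_of_hasCompactSupport (HasCompactSupport.of_compactSpace f)
  set E : ℕ → Set ℤ_[p] := fun n => {x : ℤ_[p] | ‖x‖ ≤ (p:ℝ) ^ (-(n:ℤ))} with hEdef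
  have hEmeas : ∀ n, MeasurableSet (E n) := by
    intro n
    have : E n = Metric.closedBall 0 ((p:ℝ) ^ (-(n:ℤ))) := by
      ext x; simp [E, Metric.mem_closedBall, dist_eq_norm]
    rw [this]; exact measurableSet_closedBall
  set S : ℕ → Set ℤ_[p] := fun n => E n \ E (n+1) with hSdef
  have hSmeas : ∀ n, MeasurableSet (S n) := fun n => (hEmeas n).diff (hEmeas (n+1))
  have hSnorm : ∀ n, ∀ x ∈ S n, ‖x‖ = (p:ℝ) ^ (-(n:ℤ)) := by
    intro n x hx
    obtain ⟨h1, h2⟩ := hx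
    simp only [E, Set.mem_setOf_eq] at h1 h2
    have key := PadicInt.norm_lt_pow_iff_norm_le_pow_sub_one x (-(n:ℤ))
    have h3 : ¬ ‖x‖ < (p:ℝ) ^ (-(n:ℤ)) := by
      rw [key]
      convert h2 using 3
      push_cast; ring
    exact le_antisymm h1 (not_lt.mp h3)
  -- measure of shells
  have hEfin : ∀ n, ν (E n) ≠ ⊤ := fun n => (measure_lt_top ν _).ne
  have hEsub : ∀ n, E (n+1) ⊆ E n := by
    intro n x hx
    simp only [E, Set.mem_setOf_eq] at hx ⊢
    refine hx.trans (zpow_le_zpow_right₀ hp1.le ?_)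
    omega
  have hSmeasure : ∀ n, ν (S n) = ((p : ENNReal) ^ n)⁻¹ - ((p : ENNReal) ^ (n+1))⁻¹ := by
    intro n
    rw [hSdef]
    rw [measure_diff (hEsub n) (hEmeas (n+1)).nullMeasurableSet (hEfin (n+1))]
    rw [ball_meas ν n, ball_meas ν (n+1)]
  -- measure of {0} is zero
  have hle : ∀ n : ℕ, ν {(0:ℤ_[p])} ≤ ((p:ENNReal)⁻¹) ^ n := by
    intro n
    have hsub : {(0:ℤ_[p])} ⊆ E n := by
      intro x hx
      simp only [Set.mem_singleton_iff] at hx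
      simp [E, hx, le_of_lt (zpow_pos hppos _)]
    refine (measure_mono hsub).trans ?_
    rw [ball_meas ν n, ENNReal.inv_pow]
  have hlim : Filter.Tendsto (fun n : ℕ => ((p:ENNReal)⁻¹) ^ n) Filter.atTop (nhds 0) :=
    ENNReal.tendsto_pow_atTop_nhds_zero_of_lt_one
      (ENNReal.inv_lt_one.mpr (by exact_mod_cast (Fact.out : p.Prime).one_lt))
  have hzero : ν {(0 : ℤ_[p])} = 0 :=
    le_antisymm (ge_of_tendsto' hlim hle) zero_le
  -- the union of shells is the complement of {0}
  have hUnion : (⋃ n, S n) = {(0:ℤ_[p])}ᶜ := by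
    ext x
    simp only [Set.mem_iUnion, Set.mem_compl_iff, Set.mem_singleton_iff]
    constructor
    · rintro ⟨n, hn⟩ rfl
      have := hSnorm n 0 hn
      simp only [norm_zero] at this
      have : (0:ℝ) < (p:ℝ) ^ (-(n:ℤ)) := zpow_pos hppos _
      linarith [hSnorm n 0 hn ▸ this]
    · intro hx
      have hv : 0 ≤ (x.valuation : ℤ) := Int.natCast_nonneg _
      have hnorm : ‖x‖ = (p:ℝ) ^ (-(x.valuation : ℤ)) := PadicInt.norm_eq_zpow_neg_valuation hx
      refine ⟨(x.valuation : ℤ).toNat, ?_, ?_⟩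
      · simp only [E, Set.mem_setOf_eq, hnorm, Int.toNat_of_nonneg hv, le_refl]
      · simp only [E, Set.mem_setOf_eq, hnorm, not_le]
        apply zpow_lt_zpow_right₀ hp1
        omega
  -- pairwise disjoint
  have hdisj : Pairwise (Function.onFun Disjoint S) := by
    intro m n hmn
    simp only [Function.onFun, Set.disjoint_left]
    intro x hxm hxn
    have h1 := hSnorm m x hxm
    have h2 := hSnorm n x hxn
    have heq : ((p:ℝ)) ^ (-(m:ℤ)) = ((p:ℝ)) ^ (-(n:ℤ)) := h1 ▸ h2 ▸ rfl
    rcases lt_or_gt_of_ne hmn with h | h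
    · exact absurd heq (ne_of_gt (zpow_lt_zpow_right₀ hp1 (by omega)))
    · exact absurd heq (ne_of_lt (zpow_lt_zpow_right₀ hp1 (by omega)))
  -- split the integral
  have hA : MeasurableSet (⋃ n, S n) := MeasurableSet.iUnion hSmeas
  have hsplit : ∫ x, f x ∂ν = ∫ x in (⋃ n, S n), f x ∂ν := by
    rw [← integral_add_compl hA hfi]
    have hcompl : (⋃ n, S n)ᶜ = {(0:ℤ_[p])} := by rw [hUnion, compl_compl]
    rw [hcompl]
    rw [setIntegral_measure_zero f hzero, add_zero]
  rw [hsplit, integral_iUnion hSmeas hdisj hfi.integrableOn]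
  -- each shell integral
  have hshell : ∀ n : ℕ, ∫ x in S n, f x ∂ν = (ν (S n)).toReal * ((p:ℝ) ^ (-(n:ℤ))) ^ s := by
    intro n
    rw [setIntegral_congr_fun (hSmeas n) (fun x hx => by show ‖x‖ ^ s = _; rw [hSnorm n x hx]),
      setIntegral_const, smul_eq_mul, measureReal_def]
  set r : ℝ := (p:ℝ) ^ (-1 - s) with hrdef
  have hr0 : 0 ≤ r := Real.rpow_nonneg hppos.le _
  have hr1 : r < 1 := Real.rpow_lt_one_of_one_lt_of_neg hp1 (by linarith)
  have htoReal : ∀ n : ℕ, (ν (S n)).toReal = ((p:ℝ)^n)⁻¹ - ((p:ℝ)^(n+1))⁻¹ := by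
    intro n
    rw [hSmeasure n]
    have hle2 : ((p:ENNReal) ^ (n+1))⁻¹ ≤ ((p:ENNReal) ^ n)⁻¹ := by
      apply ENNReal.inv_le_inv.mpr
      exact pow_le_pow_right₀ (by exact_mod_cast (Fact.out : p.Prime).one_lt.le) (by omega)
    have hne : ((p:ENNReal) ^ n)⁻¹ ≠ ⊤ := by
      simp [ENNReal.inv_ne_top, pow_ne_zero, (Fact.out : p.Prime).ne_zero]
    rw [ENNReal.toReal_sub_of_le hle2 hne]
    simp [ENNReal.toReal_inv, ENNReal.toReal_pow]
  have hterm : ∀ n : ℕ, (ν (S n)).toReal * ((p:ℝ) ^ (-(n:ℤ))) ^ s = (1 - (p:ℝ)⁻¹) * r ^ n := by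
    intro n
    have h1 : (((p:ℝ) ^ (-(n:ℤ))) : ℝ) ^ s = (p:ℝ) ^ (-(n:ℝ) * s) := by
      rw [← Real.rpow_intCast (p:ℝ) (-(n:ℤ)), ← Real.rpow_mul hppos.le]
      norm_num
    have h2 : ((p:ℝ)^n)⁻¹ = (p:ℝ) ^ (-(n:ℝ)) := by
      rw [← Real.rpow_natCast (p:ℝ) n, ← Real.rpow_neg hppos.le]
    have h3 : ((p:ℝ)^(n+1))⁻¹ = (p:ℝ) ^ (-(n:ℝ) + -1) := by
      rw [← Real.rpow_natCast (p:ℝ) (n+1), ← Real.rpow_neg hppos.le]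
      push_cast; ring_nf
    have h4 : r ^ n = (p:ℝ) ^ ((-1 - s) * (n:ℝ)) := by
      rw [hrdef, ← Real.rpow_natCast ((p:ℝ) ^ (-1-s)) n, ← Real.rpow_mul hppos.le]
    rw [htoReal n, h1, h2, h3, h4,
      show (-1 - s) * (n:ℝ) = -(n:ℝ) + -(n:ℝ) * s by ring,
      Real.rpow_add hppos (-(n:ℝ)) (-1), Real.rpow_add hppos (-(n:ℝ)) (-(n:ℝ)*s),
      Real.rpow_neg_one]
    ring
  calc ∑' n, ∫ x in S n, f x ∂ν
      = ∑' n : ℕ, (1 - (p:ℝ)⁻¹) * r ^ n := by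
        refine tsum_congr fun n => ?_
        rw [hshell n, hterm n]
    _ = (1 - (p:ℝ)⁻¹) * (1 - r)⁻¹ := by
        rw [tsum_mul_left, tsum_geometric_of_lt_one hr0 hr1]
    _ = (1 - (p:ℝ)⁻¹) / (1 - r) := (div_eq_mul_inv _ _).symm

/-- For an odd prime `p`, Igusa's local zeta function of `f(x₂,x₃) = x₃² − x₂²` over `ℤ_p`
equals `((1 − p⁻¹)/(1 − p^{-1-s}))²`. -/
theorem igusa_zeta_difference_of_squares (hp : p ≠ 2)
    (μ : Measure (ℤ_[p] × ℤ_[p])) [IsProbabilityMeasure μ] [μ.IsAddLeftInvariant]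
    (s : ℝ) (hs : 0 < s) :
    (∫ z : ℤ_[p] × ℤ_[p], ‖z.2 ^ 2 - z.1 ^ 2‖ ^ s ∂μ) =
      ((1 - (p : ℝ)⁻¹) / (1 - (p : ℝ) ^ (-1 - s))) ^ 2 := by
  -- the first marginal
  set ν : Measure ℤ_[p] := μ.map Prod.fst with hν
  haveI : IsProbabilityMeasure ν := Measure.isProbabilityMeasure_map measurable_fst.aemeasurable
  haveI : ν.IsAddLeftInvariant :=
    MeasureTheory.isAddLeftInvariant_map (AddMonoidHom.fst ℤ_[p] ℤ_[p]).toAddHom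
      measurable_fst Prod.fst_surjective
  -- μ is the product measure
  haveI : (ν.prod ν).IsAddLeftInvariant := Measure.prod.instIsAddLeftInvariant
  have hprod : μ = ν.prod ν := addHaar_prob_unique μ (ν.prod ν)
  -- the linear change of variables
  obtain ⟨u2, hu2⟩ := two_isUnit_padic hp
  set c : ℤ_[p] := ((u2⁻¹ : ℤ_[p]ˣ) : ℤ_[p]) with hc
  have h2c : (2 : ℤ_[p]) * c = 1 := by
    rw [hc, ← hu2, Units.mul_inv_eq_one]
  set φ : (ℤ_[p] × ℤ_[p]) →+ (ℤ_[p] × ℤ_[p]) :=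
    { toFun := fun z => (z.2 - z.1, z.2 + z.1)
      map_zero' := by simp
      map_add' := by
        intro a b
        simp only [Prod.fst_add, Prod.snd_add, Prod.mk_add_mk, Prod.mk.injEq]
        constructor <;> ring } with hφ
  have hφc : Continuous φ :=
    (continuous_snd.sub continuous_fst).prodMk (continuous_snd.add continuous_fst)
  have hφm : Measurable φ := hφc.measurable
  have hφsurj : Function.Surjective φ := by
    rintro ⟨u, v⟩
    refine ⟨(c * (v - u), c * (v + u)), ?_⟩
    show (c * (v + u) - c * (v - u), c * (v + u) + c * (v - u)) = (u, v)
    have h1 : c * (v + u) - c * (v - u) = (2 * c) * u := by ring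
    have h2 : c * (v + u) + c * (v - u) = (2 * c) * v := by ring
    rw [Prod.mk.injEq, h1, h2, h2c, one_mul, one_mul]
    exact ⟨rfl, rfl⟩
  haveI : IsProbabilityMeasure (μ.map φ) := Measure.isProbabilityMeasure_map hφm.aemeasurable
  haveI : (μ.map φ).IsAddLeftInvariant :=
    MeasureTheory.isAddLeftInvariant_map φ.toAddHom hφm hφsurj
  have hmap : μ.map φ = μ := addHaar_prob_unique _ _
  -- the integrand after change of variables
  set g : ℤ_[p] × ℤ_[p] → ℝ := fun w => ‖w.1‖ ^ s * ‖w.2‖ ^ s with hg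
  have hrpowc : Continuous fun t : ℝ => t ^ s :=
    continuous_iff_continuousAt.mpr fun x => Real.continuousAt_rpow_const x s (Or.inr hs.le)
  have hgc : Continuous g :=
    ((hrpowc.comp (continuous_norm.comp continuous_fst)).mul
      (hrpowc.comp (continuous_norm.comp continuous_snd)))
  have hpt : ∀ z : ℤ_[p] × ℤ_[p], ‖z.2 ^ 2 - z.1 ^ 2‖ ^ s = g (φ z) := by
    intro z
    have hfactor : z.2 ^ 2 - z.1 ^ 2 = (z.2 - z.1) * (z.2 + z.1) := by ring
    show ‖z.2 ^ 2 - z.1 ^ 2‖ ^ s = ‖z.2 - z.1‖ ^ s * ‖z.2 + z.1‖ ^ s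
    rw [hfactor, norm_mul, Real.mul_rpow (norm_nonneg _) (norm_nonneg _)]
  calc (∫ z : ℤ_[p] × ℤ_[p], ‖z.2 ^ 2 - z.1 ^ 2‖ ^ s ∂μ)
      = ∫ z, g (φ z) ∂μ := integral_congr_ae (Filter.Eventually.of_forall hpt)
    _ = ∫ w, g w ∂(μ.map φ) :=
        (integral_map hφm.aemeasurable hgc.aestronglyMeasurable).symm
    _ = ∫ w, g w ∂μ := by rw [hmap]
    _ = ∫ w, g w ∂(ν.prod ν) := by rw [← hprod]
    _ = (∫ x : ℤ_[p], ‖x‖ ^ s ∂ν) * (∫ x : ℤ_[p], ‖x‖ ^ s ∂ν) := by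
        rw [hg]; exact integral_prod_mul (fun x : ℤ_[p] => ‖x‖ ^ s) (fun x : ℤ_[p] => ‖x‖ ^ s)
    _ = ((1 - (p : ℝ)⁻¹) / (1 - (p : ℝ) ^ (-1 - s))) ^ 2 := by
        rw [integral_norm_rpow ν s hs]; ring
end

section
/- For p = 2, Igusa's local zeta function of f(x,y) = x(x+2y) over Z_2 satisfies Z_f(s) = (1/4)·(2 − 2^{1-s} + 2^{-2s}) / (1 − 2^{-1-s})^2. -/
open MeasureTheory
instance : Fact (Nat.Prime 2) := ⟨Nat.prime_two⟩
noncomputable instance : MeasurableSpace ℤ_[2] := borel _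
instance : BorelSpace ℤ_[2] := ⟨rfl⟩

noncomputable abbrev nu : Measure ℤ_[2] := Measure.addHaarMeasure ⊤

instance : IsProbabilityMeasure nu :=
  ⟨by simpa using Measure.addHaarMeasure_self (K₀ := (⊤ : TopologicalSpace.PositiveCompacts ℤ_[2]))⟩

def Bn (n : ℕ) : Set ℤ_[2] := {x | ‖x‖ ≤ (2:ℝ) ^ (-n : ℤ)}

lemma measurableSet_Bn (n : ℕ) : MeasurableSet (Bn n) :=
  (isClosed_le continuous_norm continuous_const).measurableSet

lemma mem_Bn_iff {n : ℕ} {x : ℤ_[2]} : x ∈ Bn n ↔ x ∈ Ideal.span {(2:ℤ_[2]) ^ n} := by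
  have := PadicInt.norm_le_pow_iff_mem_span_pow x n (p := 2)
  simpa [Bn] using this

lemma nu_Bn (n : ℕ) : nu (Bn n) = (2:ENNReal)⁻¹ ^ n := by
  classical
  set C : ℕ → Set ℤ_[2] := fun k => (fun x => (k : ℤ_[2]) + x) ⁻¹' (Bn n) with hC
  have hmeas : ∀ k, MeasurableSet (C k) := fun k =>
    (measurableSet_Bn n).preimage (measurable_const_add _)
  have hcover : ⋃ k ∈ Finset.range (2^n), C k = Set.univ := by
    ext x
    simp only [Set.mem_iUnion, Set.mem_univ, iff_true, Finset.mem_range]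
    have ha := x.appr_lt n
    have hspec := x.appr_spec n
    rcases Nat.eq_zero_or_pos (x.appr n) with h0 | h0
    · refine ⟨0, Nat.two_pow_pos n, ?_⟩
      have : x ∈ Bn n := by
        rw [mem_Bn_iff]
        simpa [h0] using hspec
      simpa [hC] using this
    · refine ⟨2^n - x.appr n, by omega, ?_⟩
      have hle : x.appr n ≤ 2^n := ha.le
      have hcast : ((2^n - x.appr n : ℕ) : ℤ_[2]) = (2:ℤ_[2])^n - (x.appr n : ℤ_[2]) := by
        push_cast [Nat.cast_sub hle]; ring
      show ((2^n - x.appr n : ℕ) : ℤ_[2]) + x ∈ Bn n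
      rw [mem_Bn_iff, hcast]
      have h1 : (2:ℤ_[2])^n ∈ Ideal.span {(2:ℤ_[2])^n} := Ideal.mem_span_singleton_self _
      have : (2:ℤ_[2])^n - (x.appr n : ℤ_[2]) + x = (2:ℤ_[2])^n + (x - x.appr n) := by ring
      rw [this]
      exact Ideal.add_mem _ h1 hspec
  have hdisj : (↑(Finset.range (2^n)) : Set ℕ).PairwiseDisjoint C := by
    intro k hk j hj hkj
    simp only [Finset.coe_range, Set.mem_Iio] at hk hj
    rw [Function.onFun, Set.disjoint_left]
    intro x hxk hxj
    have hk' : ((k : ℤ_[2]) + x) ∈ Ideal.span {(2:ℤ_[2])^n} := mem_Bn_iff.mp hxk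
    have hj' : ((j : ℤ_[2]) + x) ∈ Ideal.span {(2:ℤ_[2])^n} := mem_Bn_iff.mp hxj
    have hsub : (((k : ℤ) - j : ℤ) : ℤ_[2]) ∈ Ideal.span {(2:ℤ_[2])^n} := by
      have := Ideal.sub_mem _ hk' hj'
      have he : ((k : ℤ_[2]) + x) - ((j : ℤ_[2]) + x) = (((k : ℤ) - j : ℤ) : ℤ_[2]) := by
        push_cast; ring
      rwa [he] at this
    have hnorm : ‖(((k : ℤ) - j : ℤ) : ℤ_[2])‖ ≤ (2:ℝ) ^ (-n : ℤ) :=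
      mem_Bn_iff.mpr hsub
    have hdvd : ((2:ℤ)^n) ∣ ((k : ℤ) - j) := by
      have := (PadicInt.norm_int_le_pow_iff_dvd (p := 2) (k := (k:ℤ) - j) (n := n)).mp
        (by exact_mod_cast hnorm)
      exact_mod_cast this
    have hkn : (k:ℤ) < 2^n := by exact_mod_cast hk
    have hjn : (j:ℤ) < 2^n := by exact_mod_cast hj
    have hk0 : (0:ℤ) ≤ k := Int.natCast_nonneg k
    have hj0 : (0:ℤ) ≤ j := Int.natCast_nonneg j
    have hlt : |(k:ℤ) - j| < 2^n := by rw [abs_lt]; omega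
    have hz : ((k:ℤ) - j) = 0 := Int.eq_zero_of_abs_lt_dvd hdvd hlt
    have : (k:ℤ) = j := by omega
    exact hkj (by exact_mod_cast this)
  have hsum : nu Set.univ = ∑ k ∈ Finset.range (2^n), nu (C k) := by
    rw [← hcover]
    exact measure_biUnion_finset hdisj (fun k _ => hmeas k)
  have hCk : ∀ k : ℕ, nu (C k) = nu (Bn n) := fun k =>
    measure_preimage_add nu _ _
  rw [measure_univ] at hsum
  simp only [hCk, Finset.sum_const, Finset.card_range, nsmul_eq_mul] at hsum
  have h2n : ((2^n : ℕ) : ENNReal) ≠ 0 := by positivity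
  have h2nt : ((2^n : ℕ) : ENNReal) ≠ ⊤ := by simp
  have : nu (Bn n) = ((2^n : ℕ) : ENNReal)⁻¹ := by
    calc nu (Bn n) = ((2^n : ℕ) : ENNReal)⁻¹ * (((2^n : ℕ) : ENNReal) * nu (Bn n)) := by
          rw [← mul_assoc, ENNReal.inv_mul_cancel h2n h2nt, one_mul]
      _ = ((2^n : ℕ) : ENNReal)⁻¹ := by rw [← hsum, mul_one]
  rw [this]
  rw [← ENNReal.inv_pow]
  norm_num

def Sn (n : ℕ) : Set ℤ_[2] := Bn n \ Bn (n+1)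

lemma measurableSet_Sn (n : ℕ) : MeasurableSet (Sn n) :=
  (measurableSet_Bn n).diff (measurableSet_Bn _)

lemma Bn_subset {m n : ℕ} (h : m ≤ n) : Bn n ⊆ Bn m := fun x hx => by
  simp only [Bn, Set.mem_setOf_eq] at hx ⊢
  exact hx.trans (zpow_le_zpow_right₀ (by norm_num) (by omega))

lemma nu_Sn (n : ℕ) : nu (Sn n) = (2:ENNReal)⁻¹ ^ (n+1) := by
  rw [Sn, measure_diff (Bn_subset (Nat.le_succ n)) (measurableSet_Bn _).nullMeasurableSet
    (measure_ne_top _ _), nu_Bn, nu_Bn]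
  refine ENNReal.sub_eq_of_eq_add (by simp) ?_
  rw [pow_succ, ← mul_add, ENNReal.inv_two_add_inv_two, mul_one]

lemma norm_eq_of_mem_Sn {n : ℕ} {x : ℤ_[2]} (h : x ∈ Sn n) : ‖x‖ = (2:ℝ) ^ (-n : ℤ) := by
  obtain ⟨h1, h2⟩ := h
  simp only [Bn, Set.mem_setOf_eq] at h1 h2
  have hx : x ≠ 0 := by
    rintro rfl
    exact h2 (by simp [norm_zero]; positivity)
  have hval := PadicInt.norm_eq_zpow_neg_valuation hx
  have h2' : (2:ℝ) = ((2:ℕ):ℝ) := by norm_num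
  rw [hval] at h1 h2 ⊢
  push_cast at h1 h2 ⊢
  have hlow : -(x.valuation:ℤ) ≤ -(n:ℤ) := by
    rwa [← zpow_le_zpow_iff_right₀ (a := (2:ℝ)) (by norm_num)]
  have hhigh : ¬ (-(x.valuation:ℤ) ≤ -(n+1:ℤ)) := by
    rw [← zpow_le_zpow_iff_right₀ (a := (2:ℝ)) (by norm_num)]
    exact_mod_cast h2
  have : x.valuation = n := by omega
  rw [this]

lemma Bn_zero : Bn 0 = Set.univ := by
  ext x; simp [Bn, PadicInt.norm_le_one]

lemma union_Sn : (⋃ n, Sn n) = {(0:ℤ_[2])}ᶜ := by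
  ext x
  simp only [Set.mem_iUnion, Set.mem_compl_iff, Set.mem_singleton_iff]
  constructor
  · rintro ⟨n, hn, hn'⟩ rfl
    exact hn' (by simp [Bn]; positivity)
  · intro hx
    refine ⟨x.valuation, ?_, ?_⟩
    · have hval := PadicInt.norm_eq_zpow_neg_valuation hx
      have hv0 : 0 ≤ x.valuation := Nat.zero_le _
      simp only [Bn, Set.mem_setOf_eq]
      rw [hval]
      push_cast
      try rfl
    · intro hmem
      simp only [Bn, Set.mem_setOf_eq] at hmem
      have hval := PadicInt.norm_eq_zpow_neg_valuation hx
      rw [hval] at hmem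
      push_cast at hmem
      have hv0 : 0 ≤ x.valuation := Nat.zero_le _
      rw [zpow_le_zpow_iff_right₀ (by norm_num : (1:ℝ) < 2)] at hmem
      omega

lemma nu_singleton_zero : nu {(0:ℤ_[2])} = 0 := by
  have hle : ∀ n : ℕ, nu {(0:ℤ_[2])} ≤ (2:ENNReal)⁻¹ ^ n := by
    intro n
    rw [← nu_Bn n]
    apply measure_mono
    intro x hx
    simp only [Set.mem_singleton_iff] at hx
    subst hx
    simp only [Bn, Set.mem_setOf_eq, norm_zero]; positivity
  have htend : Filter.Tendsto (fun n : ℕ => (2:ENNReal)⁻¹ ^ n) Filter.atTop (nhds 0) :=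
    ENNReal.tendsto_pow_atTop_nhds_zero_of_lt_one (by norm_num)
  have h0 : (0:ENNReal) ≥ nu {(0:ℤ_[2])} := ge_of_tendsto' htend hle
  exact le_antisymm h0 zero_le

lemma Sn_pairwise_disjoint : Pairwise (Function.onFun Disjoint Sn) := by
  have key : ∀ m n : ℕ, m < n → Disjoint (Sn m) (Sn n) := by
    intro m n hmn
    rw [Set.disjoint_left]
    rintro x ⟨_, hm2⟩ ⟨hn1, _⟩
    exact hm2 (Bn_subset (by omega) hn1)
  intro m n hmn
  rcases lt_or_gt_of_ne hmn with h | h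
  · exact key m n h
  · exact (key n m h).symm

lemma continuous_norm_rpow {s : ℝ} (hs : 0 < s) :
    Continuous fun x : ℤ_[2] => ‖x‖ ^ s :=
  continuous_norm.rpow_const fun _ => Or.inr hs.le

lemma integrable_norm_rpow {s : ℝ} (hs : 0 < s) :
    Integrable (fun x : ℤ_[2] => ‖x‖ ^ s) nu := by
  rw [← integrableOn_univ]
  exact (continuous_norm_rpow hs).continuousOn.integrableOn_compact isCompact_univ

lemma setIntegral_Sn {s : ℝ} (n : ℕ) :
    ∫ x in Sn n, ‖x‖ ^ s ∂nu = ((2:ℝ) ^ (-n:ℤ)) ^ s * (2:ℝ)⁻¹ ^ (n+1) := by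
  rw [setIntegral_congr_fun (measurableSet_Sn n)
    (fun x hx => by rw [norm_eq_of_mem_Sn hx] : Set.EqOn _ (fun _ => ((2:ℝ) ^ (-n:ℤ)) ^ s) (Sn n)),
    setIntegral_const, measureReal_def, nu_Sn]
  rw [smul_eq_mul, mul_comm]
  congr 1
  simp [ENNReal.toReal_pow]

lemma term_eq {s : ℝ} (n : ℕ) :
    ((2:ℝ) ^ (-n:ℤ)) ^ s * (2:ℝ)⁻¹ ^ (n+1) = 2⁻¹ * ((2:ℝ) ^ (-1-s)) ^ n := by
  have h2 : (0:ℝ) < 2 := two_pos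
  have e2 : ((2:ℝ)⁻¹) = (2:ℝ) ^ (-1:ℝ) := (Real.rpow_neg_one 2).symm
  rw [e2, ← Real.rpow_intCast 2 (-n), ← Real.rpow_mul h2.le,
    ← Real.rpow_natCast ((2:ℝ) ^ (-1:ℝ)) (n+1), ← Real.rpow_mul h2.le,
    ← Real.rpow_natCast ((2:ℝ) ^ (-1-s)) n, ← Real.rpow_mul h2.le,
    ← Real.rpow_add h2, ← Real.rpow_add h2]
  congr 1
  push_cast
  ring

lemma integral_norm_rpow_s12 {s : ℝ} (hs : 0 < s) :
    ∫ x, ‖x‖ ^ s ∂nu = 2⁻¹ * (1 - (2:ℝ) ^ (-1-s))⁻¹ := by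
  have hU : MeasurableSet (⋃ n, Sn n) := MeasurableSet.iUnion fun n => measurableSet_Sn n
  have hint := integrable_norm_rpow hs
  have hsplit := integral_add_compl hU hint
  rw [← hsplit]
  have hcompl : (⋃ n, Sn n)ᶜ = {(0:ℤ_[2])} := by rw [union_Sn, compl_compl]
  rw [hcompl]
  rw [setIntegral_measure_zero _ nu_singleton_zero, add_zero]
  rw [integral_iUnion (fun n => measurableSet_Sn n) Sn_pairwise_disjoint hint.integrableOn]
  have : ∀ n : ℕ, ∫ x in Sn n, ‖x‖ ^ s ∂nu = 2⁻¹ * ((2:ℝ) ^ (-1-s)) ^ n := fun n => by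
    rw [setIntegral_Sn, term_eq]
  rw [tsum_congr this]
  have hr0 : (0:ℝ) ≤ (2:ℝ) ^ (-1-s) := (Real.rpow_pos_of_pos two_pos _).le
  have hr1 : (2:ℝ) ^ (-1-s) < 1 :=
    Real.rpow_lt_one_of_one_lt_of_neg one_lt_two (by linarith)
  rw [tsum_mul_left, tsum_geometric_of_lt_one hr0 hr1]

lemma setIntegral_Bn_one {s : ℝ} (hs : 0 < s) :
    ∫ x in Bn 1, ‖x‖ ^ s ∂nu = 2⁻¹ * (1 - (2:ℝ) ^ (-1-s))⁻¹ - 2⁻¹ := by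
  have hint := integrable_norm_rpow hs
  have hsplit := integral_add_compl (measurableSet_Sn 0) hint
  have hcompl : (Sn 0)ᶜ = Bn 1 := by
    rw [Sn, Bn_zero]
    ext x
    simp [Set.mem_diff]
  rw [hcompl] at hsplit
  have hS0 : ∫ x in Sn 0, ‖x‖ ^ s ∂nu = 2⁻¹ := by
    rw [setIntegral_Sn, term_eq]
    simp [Real.rpow_natCast]
  rw [hS0, integral_norm_rpow_s12 hs] at hsplit
  linarith

theorem mu_eq (μ : Measure (ℤ_[2] × ℤ_[2])) [IsProbabilityMeasure μ] [μ.IsAddLeftInvariant] :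
    μ = nu.prod nu := by
  have h := Measure.isAddInvariant_eq_smul_of_compactSpace μ (nu.prod nu)
  have hu := congrArg (fun m : Measure (ℤ_[2] × ℤ_[2]) => m Set.univ) h
  simp only [measure_univ, Measure.smul_apply, smul_eq_mul, mul_one] at hu
  have : μ.addHaarScalarFactor (nu.prod nu) = 1 := by
    have := hu.symm
    rwa [ENNReal.smul_def, smul_eq_mul, mul_one, ENNReal.coe_eq_one] at this
  rw [h, this, one_smul]

lemma norm_two_padic : ‖(2:ℤ_[2])‖ = 2⁻¹ := by
  have := @PadicInt.norm_p 2 ⟨Nat.prime_two⟩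
  simpa using this

/-- Igusa's local zeta function of `f(x,y) = x(x+2y)` over `ℤ₂`:
`Z_f(s) = (1/4)·(2 − 2^{1-s} + 2^{-2s}) / (1 − 2^{-1-s})²`. -/
theorem igusa_zeta_x_mul_x_add_two_y (μ : Measure (ℤ_[2] × ℤ_[2]))
    [IsProbabilityMeasure μ] [μ.IsAddLeftInvariant] (s : ℝ) (hs : 0 < s) :
    (∫ z : ℤ_[2] × ℤ_[2], ‖z.1 * (z.1 + 2 * z.2)‖ ^ s ∂μ) =
      (1 / 4) * (2 - (2 : ℝ) ^ (1 - s) + (2 : ℝ) ^ (-2 * s)) /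
        (1 - (2 : ℝ) ^ (-1 - s)) ^ 2 := by
  rw [mu_eq μ]
  set f : ℤ_[2] × ℤ_[2] → ℝ := fun z => ‖z.1 * (z.1 + 2 * z.2)‖ ^ s with hf
  have hfc : Continuous f := by
    apply Continuous.rpow_const
    · exact (continuous_fst.mul (continuous_fst.add (continuous_const.mul continuous_snd))).norm
    · exact fun _ => Or.inr hs.le
  have hfi : Integrable f (nu.prod nu) := by
    rw [← integrableOn_univ]
    exact hfc.continuousOn.integrableOn_compact isCompact_univ
  rw [MeasureTheory.integral_prod f hfi]
  set F : ℤ_[2] → ℝ := fun x => ∫ y, f (x, y) ∂nu with hF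
  have hFi : Integrable F nu := hfi.integral_prod_left
  have hsplit := integral_add_compl (measurableSet_Sn 0) hFi
  have hcompl : (Sn 0)ᶜ = Bn 1 := by
    rw [Sn, Bn_zero]; ext x; simp [Set.mem_diff]
  rw [hcompl] at hsplit
  rw [← hsplit]
  set r : ℝ := (2:ℝ) ^ (-1-s) with hr
  have hr0 : (0:ℝ) < r := Real.rpow_pos_of_pos two_pos _
  have hr1 : r < 1 := Real.rpow_lt_one_of_one_lt_of_neg one_lt_two (by linarith)
  set I : ℝ := 2⁻¹ * (1 - r)⁻¹ with hI
  -- integral over Sn 0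
  have hS0 : ∫ x in Sn 0, F x ∂nu = 2⁻¹ := by
    have hFx : ∀ x ∈ Sn 0, F x = 1 := by
      intro x hx
      have hx1 : ‖x‖ = 1 := by simpa using norm_eq_of_mem_Sn hx
      have hval : ∀ y : ℤ_[2], f (x, y) = 1 := by
        intro y
        have h2y : ‖2 * y‖ < 1 := by
          rw [norm_mul, norm_two_padic]
          have := PadicInt.norm_le_one y
          nlinarith
        have hne : ‖x‖ ≠ ‖2 * y‖ := by rw [hx1]; exact (ne_of_lt h2y).symm
        have : ‖x + 2 * y‖ = 1 := by
          rw [PadicInt.norm_add_eq_max_of_ne hne, hx1]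
          exact max_eq_left h2y.le
        simp only [hf, norm_mul, hx1, this, one_mul, Real.one_rpow]
      simp only [hF, hval]
      simp
    rw [setIntegral_congr_fun (measurableSet_Sn 0) hFx, setIntegral_const, measureReal_def, nu_Sn]
    simp
  -- integral over Bn 1
  have hB1 : ∫ x in Bn 1, F x ∂nu = (I - 2⁻¹) * (2 * r * I) := by
    have hFx : ∀ x ∈ Bn 1, F x = ‖x‖ ^ s * (2 * r * I) := by
      intro x hx
      obtain ⟨c, hc⟩ := Ideal.mem_span_singleton'.mp (mem_Bn_iff.mp hx)
      have hxc : x = 2 * c := by rw [← hc]; ring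
      have hfy : ∀ y : ℤ_[2], f (x, y) = ‖x‖ ^ s * ((2:ℝ)⁻¹ ^ s * ‖c + y‖ ^ s) := by
        intro y
        have : x + 2 * y = 2 * (c + y) := by rw [hxc]; ring
        rw [hf]
        simp only [this, norm_mul, norm_two_padic]
        rw [Real.mul_rpow (norm_nonneg _) (by positivity),
          Real.mul_rpow (by norm_num) (norm_nonneg _)]
      have hIy : ∫ y, ‖c + y‖ ^ s ∂nu = I := by
        rw [integral_add_left_eq_self (μ := nu) (fun y : ℤ_[2] => ‖y‖ ^ s) c,
          integral_norm_rpow_s12 hs, hI, hr]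
      have h2r : (2:ℝ)⁻¹ ^ s = 2 * r := by
        rw [hr, ← Real.rpow_neg_one (2:ℝ), ← Real.rpow_mul two_pos.le]
        have hrhs : (2:ℝ) * (2:ℝ) ^ (-1-s) = (2:ℝ) ^ (1 + (-1-s)) := by
          rw [Real.rpow_add two_pos, Real.rpow_one]
        rw [hrhs]
        congr 1
        ring
      simp only [hF, hfy]
      rw [integral_const_mul, integral_const_mul, hIy, h2r]
    rw [setIntegral_congr_fun (measurableSet_Bn 1) hFx]
    have : ∫ x in Bn 1, ‖x‖ ^ s * (2 * r * I) ∂nu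
        = (∫ x in Bn 1, ‖x‖ ^ s ∂nu) * (2 * r * I) := integral_mul_const _ _
    rw [this, setIntegral_Bn_one hs, ← hr, ← hI]
  rw [hS0, hB1]
  -- final algebra
  have h4 : (2:ℝ) ^ (2:ℝ) = 4 := by
    have := Real.rpow_natCast (2:ℝ) 2
    norm_num at this
    linarith
  have h1s : (2:ℝ) ^ (1 - s) = 4 * r := by
    rw [hr]
    have he : (1:ℝ) - s = 2 + (-1 - s) := by ring
    rw [he, Real.rpow_add two_pos, h4]
  have h2s : (2:ℝ) ^ (-2 * s) = 4 * r ^ 2 := by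
    rw [hr]
    have he : (-2:ℝ) * s = 2 + (-1 - s) * (2:ℕ) := by push_cast; ring
    rw [he, Real.rpow_add two_pos, h4, Real.rpow_mul two_pos.le, Real.rpow_natCast]
  rw [h1s, h2s, hI]
  have hne : (1:ℝ) - r ≠ 0 := by linarith
  field_simp
  ring
end

section
/- For p = 2, Igusa's local zeta function of f(x,y) = x^2 + y^2 over Z_2 equals Z_f(s) = 2^{-1} / (1 − 2^{-1-s}). -/
open MeasureTheory
open scoped ENNReal NNReal
namespace IgusaAux

lemma two_prime : Prime (2 : ℤ_[2]) := by simpa using PadicInt.prime_p (p := 2)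

lemma dvd_of_toZMod_eq_zero {y : ℤ_[2]} (hy : PadicInt.toZMod y = 0) : (2:ℤ_[2]) ∣ y := by
  have : y ∈ RingHom.ker (PadicInt.toZMod : ℤ_[2] →+* ZMod 2) := hy
  rw [PadicInt.ker_toZMod, PadicInt.maximalIdeal_eq_span_p, Ideal.mem_span_singleton] at this
  simpa using this

lemma even_or_odd (x : ℤ_[2]) : ∃ t, x = 2 * t ∨ x = 1 + 2 * t := by
  have h01 : ∀ a : ZMod 2, a = 0 ∨ a = 1 := by decide
  rcases h01 (PadicInt.toZMod x) with h | h
  · obtain ⟨t, ht⟩ := dvd_of_toZMod_eq_zero h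
    exact ⟨t, Or.inl ht⟩
  · have : PadicInt.toZMod (x - 1) = 0 := by rw [map_sub, h, map_one, sub_self]
    obtain ⟨t, ht⟩ := dvd_of_toZMod_eq_zero this
    exact ⟨t, Or.inr (by linear_combination ht)⟩

lemma not_two_dvd_odd (t : ℤ_[2]) : ¬ (2:ℤ_[2]) ∣ 1 + 2 * t := by
  intro h
  have h1 : (2:ℤ_[2]) ∣ 1 := (dvd_add_right (Dvd.intro t rfl)).mp (by rwa [add_comm] at h)
  exact two_prime.not_unit (isUnit_of_dvd_one h1)

lemma two_ne_zero' : (2:ℤ_[2]) ≠ 0 := two_prime.ne_zero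

lemma cancel {k : ℕ} {a b : ℤ_[2]} : (2:ℤ_[2])^k * a ∣ 2^k * b ↔ a ∣ b :=
  mul_dvd_mul_iff_left (pow_ne_zero k two_ne_zero')

lemma pow_succ_not_dvd (k : ℕ) : ¬ (2:ℤ_[2])^(k+1) ∣ 2^k := by
  intro h
  have : (2:ℤ_[2])^k * 2 ∣ 2^k * 1 := by
    rw [mul_one, ← pow_succ] at *; exact h
  exact two_prime.not_unit (isUnit_of_dvd_one (cancel.mp this))

lemma dvd_double {j : ℕ} {w : ℤ_[2]} : (2:ℤ_[2])^(j+1) ∣ 2 * w ↔ (2:ℤ_[2])^j ∣ w := by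
  rw [pow_succ']
  exact mul_dvd_mul_iff_left two_ne_zero'

/-- `4 ∣ x² + y²` implies both `x` and `y` are even. -/
lemma four_dvd {x y : ℤ_[2]} (h : (2:ℤ_[2])^2 ∣ x^2 + y^2) : (2:ℤ_[2]) ∣ x ∧ (2:ℤ_[2]) ∣ y := by
  have h2 : (2:ℤ_[2]) ∣ x^2 + y^2 := dvd_trans ⟨2, by ring⟩ h
  obtain ⟨a, ha | ha⟩ := even_or_odd x <;> obtain ⟨b, hb | hb⟩ := even_or_odd y
  · exact ⟨⟨a, ha⟩, ⟨b, hb⟩⟩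
  · exfalso; apply not_two_dvd_odd (2*a^2 + 2*b + 2*b^2)
    rw [show (1:ℤ_[2]) + 2*(2*a^2 + 2*b + 2*b^2) = x^2 + y^2 by subst ha hb; ring]
    exact h2
  · exfalso; apply not_two_dvd_odd (2*b^2 + 2*a + 2*a^2)
    rw [show (1:ℤ_[2]) + 2*(2*b^2 + 2*a + 2*a^2) = x^2 + y^2 by subst ha hb; ring]
    exact h2
  · exfalso
    apply pow_succ_not_dvd 1
    have h4 : (2:ℤ_[2])^2 ∣ 2^2 * (a + a^2 + b + b^2) + 2 := by
      rw [show (2:ℤ_[2])^2 * (a + a^2 + b + b^2) + 2 = x^2 + y^2 by subst ha hb; ring]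
      exact h
    simpa using (dvd_add_right (Dvd.intro _ rfl)).mp h4

/-- Key valuation fact: `2^n ∣ x² + y² ↔ 2^((n+1)/2) ∣ x + y ∧ 2^(n/2) ∣ x`. -/
lemma dvd_char : ∀ n : ℕ, ∀ x y : ℤ_[2],
    ((2:ℤ_[2])^n ∣ x^2 + y^2 ↔ (2:ℤ_[2])^((n+1)/2) ∣ x + y ∧ (2:ℤ_[2])^(n/2) ∣ x) := by
  intro n
  induction n using Nat.strong_induction_on with
  | _ n IH =>
  match n with
  | 0 => intro x y; simp
  | 1 =>
    intro x y
    norm_num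
    obtain ⟨a, ha | ha⟩ := even_or_odd x <;> obtain ⟨b, hb | hb⟩ := even_or_odd y <;> subst ha hb
    · constructor <;> intro _
      · exact ⟨a + b, by ring⟩
      · exact ⟨2*a^2 + 2*b^2, by ring⟩
    · apply iff_of_false
      · rw [show (2*a)^2 + (1+2*b)^2 = 1 + 2*(2*a^2 + 2*b + 2*b^2) by ring]
        exact not_two_dvd_odd _
      · rw [show 2*a + (1+2*b) = 1 + 2*(a + b) by ring]
        exact not_two_dvd_odd _
    · apply iff_of_false
      · rw [show (1+2*a)^2 + (2*b)^2 = 1 + 2*(2*b^2 + 2*a + 2*a^2) by ring]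
        exact not_two_dvd_odd _
      · rw [show (1+2*a) + 2*b = 1 + 2*(a + b) by ring]
        exact not_two_dvd_odd _
    · constructor <;> intro _
      · exact ⟨1 + a + b, by ring⟩
      · exact ⟨1 + 2*(a + a^2 + b + b^2), by ring⟩
  | (k+2) =>
    intro x y
    have e1 : (k+2+1)/2 = (k+1)/2 + 1 := by omega
    have e2 : (k+2)/2 = k/2 + 1 := by omega
    rw [e1, e2]
    constructor
    · intro h
      have h4 : (2:ℤ_[2])^2 ∣ x^2 + y^2 := dvd_trans (pow_dvd_pow 2 (by omega)) h
      obtain ⟨⟨u, hu⟩, ⟨v, hv⟩⟩ := four_dvd h4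
      subst hu hv
      have hk : (2:ℤ_[2])^k ∣ u^2 + v^2 := by
        apply (cancel (k := 2)).mp
        rw [show (2:ℤ_[2])^2 * (u^2+v^2) = (2*u)^2 + (2*v)^2 by ring, ← pow_add]
        exact dvd_trans (pow_dvd_pow 2 (by omega)) h
      obtain ⟨hsum, hx⟩ := (IH k (by omega) u v).mp hk
      constructor
      · rw [show 2*u + 2*v = 2 * (u + v) by ring]
        exact dvd_double.mpr hsum
      · exact dvd_double.mpr hx
    · rintro ⟨h1, h2⟩
      have hx2 : (2:ℤ_[2]) ∣ x := dvd_trans (dvd_pow_self 2 (Nat.succ_ne_zero _)) h2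
      have hxy2 : (2:ℤ_[2]) ∣ x + y := dvd_trans (dvd_pow_self 2 (Nat.succ_ne_zero _)) h1
      have hy2 : (2:ℤ_[2]) ∣ y := by
        have := dvd_sub hxy2 hx2
        simpa using this
      obtain ⟨u, hu⟩ := hx2
      obtain ⟨v, hv⟩ := hy2
      subst hu hv
      have hu' : (2:ℤ_[2])^(k/2) ∣ u := dvd_double.mp h2
      have hsum' : (2:ℤ_[2])^((k+1)/2) ∣ u + v := by
        apply dvd_double.mp
        rwa [show 2 * (u + v) = 2*u + 2*v by ring]
      have hk : (2:ℤ_[2])^k ∣ u^2 + v^2 := (IH k (by omega) u v).mpr ⟨hsum', hu'⟩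
      have := mul_dvd_mul_left ((2:ℤ_[2])^2) hk
      rw [show (2:ℤ_[2])^2 * (u^2+v^2) = (2*u)^2 + (2*v)^2 by ring, ← pow_add] at this
      rwa [show 2 + k = k + 2 by omega] at this

lemma norm_le_iff_dvd (x : ℤ_[2]) (n : ℕ) : ‖x‖ ≤ (2:ℝ) ^ (-(n:ℤ)) ↔ (2:ℤ_[2])^n ∣ x := by
  have := PadicInt.norm_le_pow_iff_mem_span_pow x n
  rw [Ideal.mem_span_singleton] at this
  simpa using this

/-- The set of pairs `(x, y)` with `v₂(x² + y²) ≥ n`. -/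
def S (n : ℕ) : Set (ℤ_[2] × ℤ_[2]) :=
  {z | (2:ℤ_[2])^((n+1)/2) ∣ z.1 + z.2 ∧ (2:ℤ_[2])^(n/2) ∣ z.1}

lemma mem_S_iff (n : ℕ) (z : ℤ_[2] × ℤ_[2]) :
    z ∈ S n ↔ ‖z.1^2 + z.2^2‖ ≤ (2:ℝ)^(-(n:ℤ)) := by
  rw [norm_le_iff_dvd, dvd_char n z.1 z.2]; rfl

lemma S_zero : S 0 = Set.univ := by
  ext z; simp [S]

lemma S_succ_subset (n : ℕ) : S (n+1) ⊆ S n := fun z hz =>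
  ⟨dvd_trans (pow_dvd_pow 2 (by omega)) hz.1, dvd_trans (pow_dvd_pow 2 (by omega)) hz.2⟩

lemma S_antitone : Antitone S := antitone_nat_of_succ_le S_succ_subset

lemma isClosed_S (n : ℕ) : IsClosed (S n) := by
  have h1 : S n = ((fun z : ℤ_[2] × ℤ_[2] => ‖z.1 + z.2‖) ⁻¹' Set.Iic ((2:ℝ)^(-(((n+1)/2 : ℕ)):ℤ)))
      ∩ ((fun z : ℤ_[2] × ℤ_[2] => ‖z.1‖) ⁻¹' Set.Iic ((2:ℝ)^(-((n/2 : ℕ)):ℤ))) := by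
    ext z
    simp only [S, Set.mem_setOf_eq, Set.mem_inter_iff, Set.mem_preimage, Set.mem_Iic]
    rw [norm_le_iff_dvd, norm_le_iff_dvd]
  rw [h1]
  exact (IsClosed.preimage (by fun_prop) isClosed_Iic).inter
    (IsClosed.preimage (by fun_prop) isClosed_Iic)

lemma measurableSet_S (n : ℕ) : MeasurableSet (S n) := (isClosed_S n).measurableSet

/-- translation used to split `S n` into two copies of `S (n+1)`. -/
noncomputable def c (n : ℕ) : ℤ_[2] × ℤ_[2] :=
  if Even n then (0, 2^(n/2)) else (2^(n/2), 2^(n/2))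

lemma S_split (n : ℕ) :
    S n = S (n+1) ∪ ((fun z => -c n + z) ⁻¹' S (n+1)) ∧
      Disjoint (S (n+1)) ((fun z => -c n + z) ⁻¹' S (n+1)) := by
  rcases Nat.even_or_odd n with he | ho
  · -- even case: n = 2m
    obtain ⟨m, hm⟩ := he
    have hn2 : n/2 = m := by omega
    have hev : Even n := ⟨m, hm⟩
    have hc : c n = (0, 2^m) := by simp [c, hev, hn2]
    have e1 : (n+1)/2 = m := by omega
    have e3 : (n+2)/2 = m+1 := by omega
    have e4 : (n+1+1)/2 = m+1 := by omega
    constructor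
    · ext ⟨x, y⟩
      simp only [S, Set.mem_setOf_eq, Set.mem_union, Set.mem_preimage, hc, Prod.neg_mk,
        Prod.mk_add_mk, neg_zero, zero_add, e1, hn2, e3, e4]
      constructor
      · rintro ⟨⟨w, hw⟩, hx⟩
        obtain ⟨t, ht | ht⟩ := even_or_odd w
        · rw [ht] at hw
          exact Or.inl ⟨⟨t, by linear_combination hw⟩, hx⟩
        · rw [ht] at hw
          exact Or.inr ⟨⟨t, by linear_combination hw⟩, hx⟩
      · rintro (⟨h1, h2⟩ | ⟨⟨w, hw⟩, h2⟩)
        · exact ⟨dvd_trans (pow_dvd_pow 2 (by omega)) h1, h2⟩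
        · exact ⟨⟨2*w + 1, by linear_combination hw⟩, h2⟩
    · rw [Set.disjoint_left]
      rintro ⟨x, y⟩ hz hz'
      simp only [S, Set.mem_setOf_eq, Set.mem_preimage, hc, Prod.neg_mk,
        Prod.mk_add_mk, neg_zero, zero_add, e4] at hz hz'
      obtain ⟨⟨w, hw⟩, -⟩ := hz
      obtain ⟨⟨w', hw'⟩, -⟩ := hz'
      exact pow_succ_not_dvd m ⟨w - w', by linear_combination hw - hw'⟩
  · -- odd case: n = 2m+1
    obtain ⟨m, hm⟩ := ho
    have hno : ¬ Even n := by
      rw [hm, Nat.even_add_one, not_not]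
      exact ⟨m, by omega⟩
    have hn2 : n/2 = m := by omega
    have hc : c n = (2^m, 2^m) := by simp [c, hno, hn2]
    have e1 : (n+1)/2 = m+1 := by omega
    have e4 : (n+1+1)/2 = m+1 := by omega
    constructor
    · ext ⟨x, y⟩
      simp only [S, Set.mem_setOf_eq, Set.mem_union, Set.mem_preimage, hc, Prod.neg_mk,
        Prod.mk_add_mk, e1, hn2, e4]
      constructor
      · rintro ⟨⟨w, hw⟩, ⟨u, hu⟩⟩
        obtain ⟨t, ht | ht⟩ := even_or_odd u
        · rw [ht] at hu
          exact Or.inl ⟨⟨w, hw⟩, ⟨t, by linear_combination hu⟩⟩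
        · rw [ht] at hu
          exact Or.inr ⟨⟨w - 1, by linear_combination hw⟩, ⟨t, by linear_combination hu⟩⟩
      · rintro (⟨h1, h2⟩ | ⟨⟨w, hw⟩, ⟨v, hv⟩⟩)
        · exact ⟨h1, dvd_trans (pow_dvd_pow 2 (by omega)) h2⟩
        · exact ⟨⟨w + 1, by linear_combination hw⟩, ⟨2*v + 1, by linear_combination hv⟩⟩
    · rw [Set.disjoint_left]
      rintro ⟨x, y⟩ hz hz'
      simp only [S, Set.mem_setOf_eq, Set.mem_preimage, hc, Prod.neg_mk,
        Prod.mk_add_mk, e1, e4] at hz hz'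
      obtain ⟨-, ⟨v, hv⟩⟩ := hz
      obtain ⟨-, ⟨v', hv'⟩⟩ := hz'
      exact pow_succ_not_dvd m ⟨v - v', by linear_combination hv - hv'⟩

lemma measure_S (μ : Measure (ℤ_[2] × ℤ_[2])) [IsProbabilityMeasure μ]
    [μ.IsAddLeftInvariant] (n : ℕ) : μ (S n) = 2⁻¹ ^ n := by
  induction n with
  | zero => simp [S_zero]
  | succ n ih =>
    obtain ⟨hun, hdis⟩ := S_split n
    have hmeas_pre : MeasurableSet ((fun z => -c n + z) ⁻¹' S (n+1)) :=
      (measurableSet_S (n+1)).preimage (measurable_const_add _)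
    have hpre : μ ((fun z => -c n + z) ⁻¹' S (n+1)) = μ (S (n+1)) :=
      measure_preimage_add μ _ _
    have key : (2:ℝ≥0∞)⁻¹ ^ n = μ (S (n+1)) + μ (S (n+1)) := by
      rw [← ih, hun, measure_union hdis hmeas_pre, hpre]
    have h2 : (2:ℝ≥0∞) * μ (S (n+1)) = 2⁻¹ ^ n := by
      rw [key, two_mul]
    calc μ (S (n+1)) = (2⁻¹ * 2) * μ (S (n+1)) := by
          rw [ENNReal.inv_mul_cancel (by norm_num) (by norm_num), one_mul]
      _ = 2⁻¹ * (2 * μ (S (n+1))) := by ring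
      _ = 2⁻¹ ^ (n+1) := by rw [h2, pow_succ, mul_comm]

lemma measure_T (μ : Measure (ℤ_[2] × ℤ_[2])) [IsProbabilityMeasure μ]
    [μ.IsAddLeftInvariant] (n : ℕ) : μ (S n \ S (n+1)) = 2⁻¹ ^ (n+1) := by
  rw [measure_diff (S_succ_subset n) (measurableSet_S (n+1)).nullMeasurableSet
    (measure_ne_top μ _), measure_S μ, measure_S μ]
  have h : (2⁻¹:ℝ≥0∞) ^ n = 2⁻¹ ^ (n+1) + 2⁻¹ ^ (n+1) := by
    rw [← two_mul, pow_succ, ← mul_assoc]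
    rw [show (2:ℝ≥0∞) * 2⁻¹^n * 2⁻¹ = 2⁻¹^n * (2 * 2⁻¹) by ring,
      ENNReal.mul_inv_cancel (by norm_num) (by norm_num), mul_one]
  rw [h, ENNReal.add_sub_cancel_right (by simp)]

lemma norm_eq_pow {a : ℤ_[2]} {n : ℕ} (h1 : ‖a‖ ≤ (2:ℝ)^(-(n:ℤ)))
    (h2 : ¬ ‖a‖ ≤ (2:ℝ)^(-((n+1:ℕ):ℤ))) : ‖a‖ = (2:ℝ)^(-(n:ℤ)) := by
  refine le_antisymm h1 (not_lt.mp fun hlt => h2 ?_)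
  have key := PadicInt.norm_le_pow_iff_norm_lt_pow_add_one a (-((n+1:ℕ):ℤ))
  have e : (-((n+1:ℕ):ℤ)) + 1 = -(n:ℤ) := by push_cast; ring
  rw [e, show ((2:ℕ):ℝ) = (2:ℝ) from by norm_num] at key
  exact key.mpr hlt

end IgusaAux

open IgusaAux

/-- Igusa's local zeta function of `f(x,y) = x² + y²` over `ℤ₂`:
`Z_f(s) = 2⁻¹ / (1 − 2^{-1-s})`. -/
theorem igusa_zeta_sum_of_two_squares (μ : Measure (ℤ_[2] × ℤ_[2]))
    [IsProbabilityMeasure μ] [μ.IsAddLeftInvariant] (s : ℝ) (hs : 0 < s) :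
    (∫ z : ℤ_[2] × ℤ_[2], ‖z.1 ^ 2 + z.2 ^ 2‖ ^ s ∂μ) =
      (2 : ℝ)⁻¹ / (1 - (2 : ℝ) ^ (-1 - s)) := by
  set f : ℤ_[2] × ℤ_[2] → ℝ := fun z => ‖z.1 ^ 2 + z.2 ^ 2‖ ^ s with hf
  have hcont : Continuous f :=
    Continuous.rpow_const (by fun_prop) (fun z => Or.inr hs.le)
  have hint : Integrable f μ := by
    rw [← integrableOn_univ]
    exact hcont.continuousOn.integrableOn_compact isCompact_univ
  set T : ℕ → Set (ℤ_[2] × ℤ_[2]) := fun n => S n \ S (n+1) with hT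
  have hTmeas : ∀ n, MeasurableSet (T n) :=
    fun n => (measurableSet_S n).diff (measurableSet_S (n+1))
  have hTdisj : Pairwise (Function.onFun Disjoint T) := by
    have key : ∀ i j, i < j → Disjoint (T i) (T j) := by
      intro i j hij
      exact Set.disjoint_left.mpr
        (fun z hzi hzj => hzi.2 (S_antitone (by omega : i+1 ≤ j) hzj.1))
    intro i j hij
    rcases hij.lt_or_gt with h | h
    · exact key _ _ h
    · exact (key _ _ h).symm
  have hUnionMeas : MeasurableSet (⋃ n, T n) := MeasurableSet.iUnion hTmeas
  have hcompl_sub : ∀ n, (⋃ n, T n)ᶜ ⊆ S n := by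
    intro n z hz
    induction n with
    | zero => rw [S_zero]; trivial
    | succ n ihn =>
      by_contra hne
      exact hz (Set.mem_iUnion.mpr ⟨n, ihn, hne⟩)
  have hnull : μ ((⋃ n, T n)ᶜ) = 0 := by
    by_contra h0
    obtain ⟨n, hn⟩ := ENNReal.exists_inv_two_pow_lt h0
    exact absurd hn (not_lt.mpr ((measure_mono (hcompl_sub n)).trans_eq (measure_S μ n)))
  have hsplit : ∫ z, f z ∂μ = ∫ z in (⋃ n, T n), f z ∂μ := by
    rw [← integral_add_compl hUnionMeas hint]
    rw [Measure.restrict_eq_zero.mpr hnull, integral_zero_measure, add_zero]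
  have hTn : ∀ n, ∫ z in T n, f z ∂μ = 2⁻¹ * ((2:ℝ)^(-1-s))^n := by
    intro n
    have hnorm : Set.EqOn f (fun _ => ((2:ℝ) ^ (-(n:ℤ))) ^ s) (T n) := by
      intro z hz
      have h1 : ‖z.1^2 + z.2^2‖ ≤ (2:ℝ)^(-(n:ℤ)) := (mem_S_iff n z).mp hz.1
      have h2 : ¬ ‖z.1^2+z.2^2‖ ≤ (2:ℝ)^(-((n+1:ℕ):ℤ)) :=
        fun h => hz.2 ((mem_S_iff (n+1) z).mpr h)
      simp only [hf]
      rw [norm_eq_pow h1 h2]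
    rw [setIntegral_congr_fun (hTmeas n) hnorm, setIntegral_const, smul_eq_mul, hT]
    simp only [measureReal_def]
    rw [measure_T μ n]
    have htoReal : ((2:ℝ≥0∞)⁻¹ ^ (n+1)).toReal = (2:ℝ)⁻¹ ^ (n+1) := by simp
    rw [htoReal]
    have hrs : ((2:ℝ)^(-(n:ℤ)))^s = ((2:ℝ)^(-s))^n := by
      rw [← Real.rpow_intCast 2 (-(n:ℤ)), ← Real.rpow_natCast ((2:ℝ)^(-s)) n,
        ← Real.rpow_mul (by norm_num : (0:ℝ) ≤ 2), ← Real.rpow_mul (by norm_num : (0:ℝ) ≤ 2)]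
      congr 1
      push_cast
      ring
    rw [hrs, pow_succ', mul_assoc, ← mul_pow]
    congr 2
    rw [show (-1-s : ℝ) = (-1) + (-s) by ring, Real.rpow_add (by norm_num), Real.rpow_neg_one]
  have hr0 : (0:ℝ) ≤ (2:ℝ)^(-1-s) := Real.rpow_nonneg (by norm_num) _
  have hr1 : (2:ℝ)^(-1-s) < 1 :=
    Real.rpow_lt_one_of_one_lt_of_neg (by norm_num) (by linarith)
  calc (∫ z, f z ∂μ) = ∑' n, ∫ z in T n, f z ∂μ := by
        rw [hsplit, integral_iUnion hTmeas hTdisj hint.integrableOn]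
    _ = ∑' n : ℕ, 2⁻¹ * ((2:ℝ)^(-1-s))^n := tsum_congr hTn
    _ = 2⁻¹ * (1 - (2:ℝ)^(-1-s))⁻¹ := by
        rw [tsum_mul_left, tsum_geometric_of_lt_one hr0 hr1]
    _ = (2 : ℝ)⁻¹ / (1 - (2 : ℝ) ^ (-1 - s)) := (div_eq_mul_inv _ _).symm
end

section
/- Let L_p be a Z_p-Lie algebra free of rank 3 with basis (e_1,e_2,e_3) and structure matrix A (with rows the coordinates of [e_2,e_3], [e_3,e_1], [e_1,e_2]). A full sublattice Λ with basis matrix M = Dα^{-1}, where D = diag(p^{r_0+r_1+r_2}, p^{r_0+r_2}, p^{r_0}) and α ∈ GL_3(Z_p), is a Lie subalgebra of L_p if and only if v_p((α e_1)^t A (α e_1)) ≥ r_1 − r_0, where α e_1 is the first column of α. -/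
open Matrix

variable {p : ℕ} [Fact p.Prime]

/-- The "cross product" `(v₂w₃−v₃w₂, v₃w₁−v₁w₃, v₁w₂−v₂w₁)`. -/
def cross {R : Type*} [CommRing R] (v w : Fin 3 → R) : Fin 3 → R :=
  ![v 1 * w 2 - v 2 * w 1, v 2 * w 0 - v 0 * w 2, v 0 * w 1 - v 1 * w 0]

/-- The bilinear antisymmetric bracket on `R³` with structure matrix `A`, whose rows are
the coordinates of `[e₂,e₃]`, `[e₃,e₁]`, `[e₁,e₂]`: `[v,w] = (v × w)ᵗ A`. -/
def brk {R : Type*} [CommRing R] (A : Matrix (Fin 3) (Fin 3) R) (v w : Fin 3 → R) :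
    Fin 3 → R :=
  Matrix.vecMul (cross v w) A

namespace SubalgAux

variable {R : Type*} [CommRing R]

lemma brk_self (A : Matrix (Fin 3) (Fin 3) R) (v : Fin 3 → R) : brk A v v = 0 := by
  funext l
  simp [brk, cross, vecMul, dotProduct, Fin.sum_univ_three]
  ring

lemma brk_swap (A : Matrix (Fin 3) (Fin 3) R) (v w : Fin 3 → R) : brk A w v = -brk A v w := by
  funext l
  simp [brk, cross, vecMul, dotProduct, Fin.sum_univ_three]
  ring

lemma brk_smul (A : Matrix (Fin 3) (Fin 3) R) (s t : R) (u v : Fin 3 → R) :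
    brk A (s • u) (t • v) = (s * t) • brk A u v := by
  funext l
  simp [brk, cross, vecMul, dotProduct, Fin.sum_univ_three, smul_eq_mul]
  ring

lemma brk_sum3 (A : Matrix (Fin 3) (Fin 3) R) (a b : Fin 3 → R) (u : Fin 3 → Fin 3 → R) :
    brk A (∑ i, a i • u i) (∑ j, b j • u j)
      = ∑ i, ∑ j, (a i * b j) • brk A (u i) (u j) := by
  funext l
  simp [brk, cross, vecMul, dotProduct, Fin.sum_univ_three, Finset.sum_apply, Pi.smul_apply,
    smul_eq_mul]
  ring

lemma mulVec_cross12 (B : Matrix (Fin 3) (Fin 3) R) :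
    B.mulVec (cross (B 1) (B 2)) = ![B.det, 0, 0] := by
  funext l
  fin_cases l <;>
    simp [cross, mulVec, dotProduct, det_fin_three, Fin.sum_univ_three] <;> ring

lemma mulVec_cross20 (B : Matrix (Fin 3) (Fin 3) R) :
    B.mulVec (cross (B 2) (B 0)) = ![0, B.det, 0] := by
  funext l
  fin_cases l <;>
    simp [cross, mulVec, dotProduct, det_fin_three, Fin.sum_univ_three] <;> ring

lemma mulVec_cross01 (B : Matrix (Fin 3) (Fin 3) R) :
    B.mulVec (cross (B 0) (B 1)) = ![0, 0, B.det] := by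
  funext l
  fin_cases l <;>
    simp [cross, mulVec, dotProduct, det_fin_three, Fin.sum_univ_three] <;> ring

/-- If `C * B = 1` then the cross product of two (cyclically consecutive) rows of `B`
is `det B` times a column of `C`. -/
lemma cross_rows (B C : Matrix (Fin 3) (Fin 3) R) (h : C * B = 1)
    (i j k : Fin 3) (hk : B.mulVec (cross (B i) (B j)) = fun m => if m = k then B.det else 0) :
    cross (B i) (B j) = B.det • fun m => C m k := by
  have h1 : C.mulVec (B.mulVec (cross (B i) (B j))) = cross (B i) (B j) := by
    rw [mulVec_mulVec, h, one_mulVec]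
  rw [hk] at h1
  rw [← h1]
  funext m
  simp [mulVec, dotProduct, Fin.sum_univ_three, Pi.smul_apply, smul_eq_mul]
  fin_cases k <;> simp <;> ring

lemma key_norm {p : ℕ} [Fact p.Prime] (x : ℤ_[p]) (r₀ r₁ r₂ : ℕ) :
    ((p:ℤ_[p])^(r₀+r₁+r₂) ∣ (p:ℤ_[p])^(r₀+r₂+r₀) * x) ↔
      ‖x‖ ≤ (p:ℝ)^(-((r₁:ℤ)-(r₀:ℤ))) := by
  have hp : (1:ℝ) < p := by exact_mod_cast (Fact.out : p.Prime).one_lt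
  have hppos : (0:ℝ) < p := lt_trans one_pos hp
  rw [← Ideal.mem_span_singleton, ← PadicInt.norm_le_pow_iff_mem_span_pow,
    norm_mul, PadicInt.norm_p_pow]
  have he : (-((r₀+r₁+r₂ : ℕ) : ℤ)) = (-((r₀+r₂+r₀ : ℕ):ℤ)) + (-((r₁:ℤ)-(r₀:ℤ))) := by
    push_cast; ring
  rw [he, zpow_add₀ (ne_of_gt hppos)]
  exact mul_le_mul_iff_right₀ (zpow_pos hppos _)

end SubalgAux

open SubalgAux in
/-- The sublattice with basis matrix `M = D α⁻¹`, `D = diag(p^{r₀+r₁+r₂}, p^{r₀+r₂}, p^{r₀})`,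
is a Lie subalgebra of the rank-3 `ℤ_p`-Lie algebra with structure matrix `A` iff
`v_p((α e₁)ᵗ A (α e₁)) ≥ r₁ − r₀` (stated via the norm: `‖(αe₁)ᵗ A (αe₁)‖ ≤ p^{r₀−r₁}`). -/
theorem sublattice_is_subalgebra_iff
    (A : Matrix (Fin 3) (Fin 3) ℤ_[p])
    (hJacobi : ∀ u v w : Fin 3 → ℤ_[p],
      brk A u (brk A v w) + brk A v (brk A w u) + brk A w (brk A u v) = 0)
    (r₀ r₁ r₂ : ℕ) (α : GL (Fin 3) ℤ_[p]) :
    (∀ v ∈ Submodule.span ℤ_[p] (Set.range fun i =>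
        (Matrix.diagonal ![(p : ℤ_[p]) ^ (r₀ + r₁ + r₂), (p : ℤ_[p]) ^ (r₀ + r₂),
          (p : ℤ_[p]) ^ r₀] * (↑α⁻¹ : Matrix (Fin 3) (Fin 3) ℤ_[p])) i),
      ∀ w ∈ Submodule.span ℤ_[p] (Set.range fun i =>
        (Matrix.diagonal ![(p : ℤ_[p]) ^ (r₀ + r₁ + r₂), (p : ℤ_[p]) ^ (r₀ + r₂),
          (p : ℤ_[p]) ^ r₀] * (↑α⁻¹ : Matrix (Fin 3) (Fin 3) ℤ_[p])) i),
      brk A v w ∈ Submodule.span ℤ_[p] (Set.range fun i =>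
        (Matrix.diagonal ![(p : ℤ_[p]) ^ (r₀ + r₁ + r₂), (p : ℤ_[p]) ^ (r₀ + r₂),
          (p : ℤ_[p]) ^ r₀] * (↑α⁻¹ : Matrix (Fin 3) (Fin 3) ℤ_[p])) i)) ↔
    ‖dotProduct (fun i => (↑α : Matrix (Fin 3) (Fin 3) ℤ_[p]) i 0)
        (A.mulVec fun i => (↑α : Matrix (Fin 3) (Fin 3) ℤ_[p]) i 0)‖ ≤
      (p : ℝ) ^ (-((r₁ : ℤ) - (r₀ : ℤ))) := by
  clear hJacobi
  set am : Matrix (Fin 3) (Fin 3) ℤ_[p] := (↑α : Matrix (Fin 3) (Fin 3) ℤ_[p]) with ham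
  set bm : Matrix (Fin 3) (Fin 3) ℤ_[p] := (↑α⁻¹ : Matrix (Fin 3) (Fin 3) ℤ_[p]) with hbm
  set d : Fin 3 → ℤ_[p] :=
    ![(p : ℤ_[p]) ^ (r₀ + r₁ + r₂), (p : ℤ_[p]) ^ (r₀ + r₂), (p : ℤ_[p]) ^ r₀] with hd
  set M : Matrix (Fin 3) (Fin 3) ℤ_[p] := Matrix.diagonal d * bm with hMdef
  set S : Submodule ℤ_[p] (Fin 3 → ℤ_[p]) :=
    Submodule.span ℤ_[p] (Set.range fun i => M i) with hS
  have hab : am * bm = 1 := α.mul_inv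
  have hba : bm * am = 1 := α.inv_mul
  -- membership criterion for the lattice
  have mem_S : ∀ x : Fin 3 → ℤ_[p], x ∈ S ↔ ∀ l, d l ∣ Matrix.vecMul x am l := by
    intro x
    rw [hS, Submodule.mem_span_range_iff_exists_fun]
    constructor
    · rintro ⟨c, rfl⟩ l
      have h1 : (∑ i, c i • M i) = Matrix.vecMul c M := by
        funext m
        simp [Matrix.vecMul, dotProduct, Fin.sum_univ_three, Finset.sum_apply, smul_eq_mul]
      rw [h1, Matrix.vecMul_vecMul, hMdef, Matrix.mul_assoc, hba, Matrix.mul_one,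
        Matrix.vecMul_diagonal]
      exact dvd_mul_left _ _
    · intro h
      choose c hc using h
      refine ⟨c, ?_⟩
      have h1 : (∑ i, c i • M i) = Matrix.vecMul c M := by
        funext m
        simp [Matrix.vecMul, dotProduct, Fin.sum_univ_three, Finset.sum_apply, smul_eq_mul]
      rw [h1, hMdef, ← Matrix.vecMul_vecMul]
      have h2 : Matrix.vecMul c (Matrix.diagonal d) = Matrix.vecMul x am := by
        funext l
        rw [Matrix.vecMul_diagonal, hc l, mul_comm]
      rw [h2, Matrix.vecMul_vecMul, hab, Matrix.vecMul_one]
  -- rows of M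
  have hM : ∀ i, M i = d i • bm i := by
    intro i; funext l
    simp [hMdef, Matrix.diagonal_mul, smul_eq_mul]
  -- det bm is a unit
  have hdet : IsUnit bm.det := by
    refine IsUnit.of_mul_eq_one am.det ?_
    rw [← Matrix.det_mul, hba, Matrix.det_one]
  -- cross products of rows of bm
  have c12 : cross (bm 1) (bm 2) = bm.det • fun m => am m 0 := by
    refine cross_rows bm am hab 1 2 0 ?_
    rw [mulVec_cross12]; funext m; fin_cases m <;> simp
  have c20 : cross (bm 2) (bm 0) = bm.det • fun m => am m 1 := by
    refine cross_rows bm am hab 2 0 1 ?_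
    rw [mulVec_cross20]; funext m; fin_cases m <;> simp
  have c01 : cross (bm 0) (bm 1) = bm.det • fun m => am m 2 := by
    refine cross_rows bm am hab 0 1 2 ?_
    rw [mulVec_cross01]; funext m; fin_cases m <;> simp
  -- the matrix B = αᵀ A α
  set B : Fin 3 → Fin 3 → ℤ_[p] :=
    fun k l => Matrix.vecMul (Matrix.vecMul (fun m => am m k) A) am l with hB
  -- membership criterion for brackets of rows of M
  have memcrit : ∀ i j k : Fin 3, cross (bm i) (bm j) = bm.det • (fun m => am m k) →
      (brk A (M i) (M j) ∈ S ↔ ∀ l, d l ∣ d i * d j * bm.det * B k l) := by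
    intro i j k hc
    have hbrk : brk A (M i) (M j) = (d i * d j * bm.det) • Matrix.vecMul (fun m => am m k) A := by
      rw [hM i, hM j, brk_smul, brk, hc]
      funext l
      simp [Matrix.vecMul, dotProduct, Fin.sum_univ_three, smul_eq_mul]
      ring
    rw [hbrk, mem_S]
    have h3 : ∀ l, Matrix.vecMul ((d i * d j * bm.det) • Matrix.vecMul (fun m => am m k) A) am l
        = d i * d j * bm.det * B k l := by
      intro l
      simp [Matrix.vecMul, dotProduct, Fin.sum_univ_three, smul_eq_mul, hB]
      ring
    exact forall_congr' fun l => by rw [h3 l]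
  -- trivial divisibility helper
  have triv : ∀ (i j k l : Fin 3), d l ∣ d i * d j →
      d l ∣ d i * d j * bm.det * B k l := fun i j k l h =>
    dvd_mul_of_dvd_left (dvd_mul_of_dvd_left h _) _
  have d21 : d 2 ∣ d 1 := by
    show (p : ℤ_[p]) ^ r₀ ∣ (p : ℤ_[p]) ^ (r₀ + r₂)
    exact pow_dvd_pow _ (by omega)
  have d10 : d 1 ∣ d 0 := by
    show (p : ℤ_[p]) ^ (r₀ + r₂) ∣ (p : ℤ_[p]) ^ (r₀ + r₁ + r₂)
    exact pow_dvd_pow _ (by omega)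
  -- membership of the three cyclic brackets
  have mem20 : brk A (M 2) (M 0) ∈ S := by
    rw [memcrit 2 0 1 c20]
    intro l
    refine triv 2 0 1 l ?_
    fin_cases l
    · exact dvd_mul_left _ _
    · exact Dvd.dvd.mul_left d10 _
    · exact Dvd.dvd.mul_left (d21.trans d10) _
  have mem01 : brk A (M 0) (M 1) ∈ S := by
    rw [memcrit 0 1 2 c01]
    intro l
    refine triv 0 1 2 l ?_
    fin_cases l
    · exact dvd_mul_right _ _
    · exact Dvd.dvd.mul_left dvd_rfl _
    · exact Dvd.dvd.mul_left d21 _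
  -- the pivotal bracket
  have hfact : d 1 * d 2 = (p : ℤ_[p]) ^ (r₀ + r₂ + r₀) := by
    show (p : ℤ_[p]) ^ (r₀ + r₂) * (p : ℤ_[p]) ^ r₀ = _
    rw [← pow_add]
  have main12 : brk A (M 1) (M 2) ∈ S ↔ ‖B 0 0‖ ≤ (p : ℝ) ^ (-((r₁ : ℤ) - (r₀ : ℤ))) := by
    rw [memcrit 1 2 0 c12]
    constructor
    · intro h
      have h0 := h 0
      rw [show d 1 * d 2 * bm.det * B 0 0 = bm.det * ((p : ℤ_[p]) ^ (r₀ + r₂ + r₀) * B 0 0) by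
        rw [← hfact]; ring] at h0
      rw [hdet.dvd_mul_left] at h0
      exact (key_norm _ _ _ _).mp h0
    · intro h l
      fin_cases l
      · have h0 := (key_norm (B 0 0) r₀ r₁ r₂).mpr h
        show d 0 ∣ d 1 * d 2 * bm.det * B 0 0
        rw [show d 1 * d 2 * bm.det * B 0 0 = bm.det * ((p : ℤ_[p]) ^ (r₀ + r₂ + r₀) * B 0 0) by
          rw [← hfact]; ring]
        rw [hdet.dvd_mul_left]
        exact h0
      · exact triv 1 2 0 1 (dvd_mul_right _ _)
      · exact triv 1 2 0 2 (dvd_mul_left _ _)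
  -- identify B 0 0 with the dot product in the statement
  have hB00 : B 0 0 = dotProduct (fun i => am i 0) (A.mulVec fun i => am i 0) := by
    simp [hB, Matrix.vecMul, Matrix.mulVec, dotProduct, Fin.sum_univ_three]
    ring
  rw [← hB00]
  constructor
  · intro h
    exact main12.mp (h (M 1) (Submodule.subset_span ⟨1, rfl⟩)
      (M 2) (Submodule.subset_span ⟨2, rfl⟩))
  · intro h v hv w hw
    have mem12 : brk A (M 1) (M 2) ∈ S := main12.mpr h
    rw [hS, Submodule.mem_span_range_iff_exists_fun] at hv hw
    obtain ⟨a, rfl⟩ := hv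
    obtain ⟨b, rfl⟩ := hw
    rw [show brk A (∑ i, a i • M i) (∑ i, b i • M i) = _ from brk_sum3 A a b (fun i => M i)]
    refine Submodule.sum_mem _ fun i _ => Submodule.sum_mem _ fun j _ =>
      Submodule.smul_mem _ _ ?_
    fin_cases i <;> fin_cases j
    · rw [brk_self]; exact S.zero_mem
    · exact mem01
    · rw [brk_swap]; exact S.neg_mem mem20
    · rw [brk_swap]; exact S.neg_mem mem01
    · rw [brk_self]; exact S.zero_mem
    · exact mem12
    · exact mem20
    · rw [brk_swap]; exact S.neg_mem mem12
    · rw [brk_self]; exact S.zero_mem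
end

section
/- For an odd prime p, Igusa's local zeta function of the binary quadratic form f(x_1,x_2) = x_1^2 − D x_2^2 over Z_p, where D is a unit in Z_p, satisfies Z_f(s) = ((1-p^{-1})/(1-p^{-1-s})) · ((1 − χ p^{-1})/(1 − χ p^{-1-s})) where χ = 1 if D is a square in Z_p^× and χ = −1 otherwise. Equivalently: Z_f(s) = ((1-p^{-1})/(1-p^{-1-s}))^2 if D is a square mod p, and Z_f(s) = (1-p^{-2})/(1-p^{-2-2s}) if D is a non-square mod p. -/
open MeasureTheory
open scoped Classical

variable {p : ℕ} [Fact p.Prime]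

section IgusaAux
open scoped ENNReal
variable {p : ℕ} [hp : Fact p.Prime]

/-- closed ball of radius p^{-i} in ℤ_p -/
def pball (p : ℕ) [Fact p.Prime] (i : ℕ) : Set ℤ_[p] := {x | ‖x‖ ≤ (p : ℝ) ^ (-(i:ℤ))}

lemma mem_pball {i : ℕ} {x : ℤ_[p]} : x ∈ pball p i ↔ ‖x‖ ≤ (p : ℝ) ^ (-(i:ℤ)) := Iff.rfl

lemma pball_eq_span (i : ℕ) : pball p i = {x : ℤ_[p] | x ∈ Ideal.span {(p:ℤ_[p])^i}} := by
  ext x; exact PadicInt.norm_le_pow_iff_mem_span_pow x i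

lemma mem_pball_iff_dvd {i : ℕ} {x : ℤ_[p]} : x ∈ pball p i ↔ (p:ℤ_[p])^i ∣ x := by
  rw [pball_eq_span]; exact Ideal.mem_span_singleton

lemma measurableSet_pball (i : ℕ) : MeasurableSet (pball p i) :=
  (IsClosed.measurableSet (isClosed_le continuous_norm continuous_const))

lemma pball_zero : pball p 0 = Set.univ := by
  ext x; simp [mem_pball, PadicInt.norm_le_one x]

lemma pball_antitone : Antitone (pball p) := by
  intro i j hij x hx
  show ‖x‖ ≤ (p:ℝ) ^ (-(i:ℤ))
  refine le_trans hx ?_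
  exact zpow_le_zpow_right₀ (a := (p:ℝ)) (by exact_mod_cast hp.1.one_lt.le) (by omega)

lemma pball_sub_mem {i : ℕ} {u v : ℤ_[p]} (hu : u ∈ pball p i) (hv : v ∈ pball p i) :
    u - v ∈ pball p i := by
  rw [mem_pball_iff_dvd] at *
  exact dvd_sub hu hv

/-- Coset of `pball p (i+1)` indexed by a digit `a`. -/
def pcoset (p : ℕ) [Fact p.Prime] (i : ℕ) (a : Fin p) : Set ℤ_[p] :=
  (fun x => -((a : ℕ) * (p:ℤ_[p])^i) + x) ⁻¹' pball p (i+1)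

lemma mem_pcoset {i : ℕ} {a : Fin p} {x : ℤ_[p]} :
    x ∈ pcoset p i a ↔ (p:ℤ_[p])^(i+1) ∣ x - (a : ℕ) * (p:ℤ_[p])^i := by
  rw [pcoset, Set.mem_preimage, mem_pball_iff_dvd, neg_add_eq_sub]

lemma pball_eq_iUnion_pcoset (i : ℕ) : pball p i = ⋃ a : Fin p, pcoset p i a := by
  ext x
  simp only [Set.mem_iUnion]
  constructor
  · intro hx
    obtain ⟨y, hy⟩ := mem_pball_iff_dvd.mp hx
    have halt : y.appr 1 < p := by simpa [pow_one] using y.appr_lt 1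
    refine ⟨⟨y.appr 1, halt⟩, ?_⟩
    rw [mem_pcoset]
    have hsp := y.appr_spec 1
    rw [pow_one, Ideal.mem_span_singleton] at hsp
    obtain ⟨w, hw⟩ := hsp
    exact ⟨w, by push_cast; linear_combination hy + (p:ℤ_[p])^i * hw⟩
  · rintro ⟨a, ha⟩
    rw [mem_pcoset] at ha
    obtain ⟨z, hz⟩ := ha
    rw [mem_pball_iff_dvd]
    exact ⟨(a:ℕ) + p * z, by linear_combination hz⟩

lemma pcoset_disjoint (i : ℕ) :
    Pairwise fun a b : Fin p => Disjoint (pcoset p i a) (pcoset p i b) := by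
  intro a b hab
  rw [Set.disjoint_left]
  intro x hxa hxb
  obtain ⟨u, hu⟩ := mem_pcoset.mp hxa
  obtain ⟨v, hv⟩ := mem_pcoset.mp hxb
  have hpne : (p:ℤ_[p]) ≠ 0 := Nat.cast_ne_zero.mpr hp.1.pos.ne'
  set m : ℤ := ((b:ℕ):ℤ) - ((a:ℕ):ℤ) with hm
  have key : ((m:ℤ) : ℤ_[p]) = (p:ℤ_[p]) * (u - v) := by
    have h2 : (p:ℤ_[p])^i * (((m:ℤ) : ℤ_[p])) =
        (p:ℤ_[p])^i * ((p:ℤ_[p]) * (u - v)) := by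
      rw [hm]
      push_cast
      linear_combination hu - hv
    exact mul_left_cancel₀ (pow_ne_zero i hpne) h2
  have hnorm : ‖((m:ℤ) : ℤ_[p])‖ < 1 := by
    rw [key, norm_mul, PadicInt.norm_p]
    calc (p:ℝ)⁻¹ * ‖u - v‖ ≤ (p:ℝ)⁻¹ * 1 :=
      mul_le_mul_of_nonneg_left (PadicInt.norm_le_one _) (by positivity)
    _ < 1 := by
        rw [mul_one]
        exact inv_lt_one_of_one_lt₀ (by exact_mod_cast hp.1.one_lt)
  rw [PadicInt.norm_int_lt_one_iff_dvd] at hnorm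
  have hm0 : m = 0 := Int.eq_zero_of_abs_lt_dvd hnorm (by
    have ha2 := a.2; have hb2 := b.2
    rw [hm, abs_lt]; omega)
  have : a.1 ≠ b.1 := fun h => hab (Fin.ext h)
  omega

section Meas
variable (μ : Measure (ℤ_[p] × ℤ_[p])) [IsProbabilityMeasure μ] [μ.IsAddLeftInvariant]

lemma meas_preimage_translate (e : (ℤ_[p] × ℤ_[p]) ≃+ (ℤ_[p] × ℤ_[p])) (he : Measurable e)
    (v : ℤ_[p] × ℤ_[p]) (S : Set (ℤ_[p] × ℤ_[p])) :
    μ (e ⁻¹' ((fun z => v + z) ⁻¹' S)) = μ (e ⁻¹' S) := by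
  have h : e ⁻¹' ((fun z => v + z) ⁻¹' S) = (fun z => e.symm v + z) ⁻¹' (e ⁻¹' S) := by
    ext z
    simp only [Set.mem_preimage, map_add, AddEquiv.apply_symm_apply]
  rw [h, measure_preimage_add]

lemma measurableSet_pcoset {i : ℕ} (a : Fin p) : MeasurableSet (pcoset p i a) :=
  (measurable_const_add _) (measurableSet_pball (i+1))

lemma pcoset_prod_eq (i j : ℕ) (a : Fin p) :
    pcoset p i a ×ˢ pball p j =
      (fun z : ℤ_[p] × ℤ_[p] => (-(((a:ℕ):ℤ_[p]) * (p:ℤ_[p])^i), 0) + z) ⁻¹'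
        (pball p (i+1) ×ˢ pball p j) := by
  ext ⟨x, y⟩
  simp only [Set.mem_prod, Set.mem_preimage, Prod.mk_add_mk, pcoset, zero_add]

lemma meas_step (e : (ℤ_[p] × ℤ_[p]) ≃+ (ℤ_[p] × ℤ_[p])) (he : Measurable e) (i j : ℕ) :
    μ (e ⁻¹' (pball p i ×ˢ pball p j)) = p * μ (e ⁻¹' (pball p (i+1) ×ˢ pball p j)) := by
  have hdecomp : pball p i ×ˢ pball p j = ⋃ a : Fin p, pcoset p i a ×ˢ pball p j := by
    rw [pball_eq_iUnion_pcoset i, Set.iUnion_prod_const]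
  rw [hdecomp, Set.preimage_iUnion, measure_iUnion]
  · have hval : ∀ a : Fin p, μ (e ⁻¹' (pcoset p i a ×ˢ pball p j)) =
        μ (e ⁻¹' (pball p (i+1) ×ˢ pball p j)) := by
      intro a
      rw [pcoset_prod_eq i j a, meas_preimage_translate μ e he]
    simp only [hval]
    rw [tsum_fintype]
    simp [Finset.sum_const, Finset.card_univ, nsmul_eq_mul]
  · intro a b hab
    apply Disjoint.preimage
    exact Set.disjoint_left.mpr fun z hz1 hz2 =>
      Set.disjoint_left.mp (pcoset_disjoint i hab) hz1.1 hz2.1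
  · intro a
    exact he (((measurableSet_pcoset a).prod (measurableSet_pball j)))

lemma meas_pball_prod (e : (ℤ_[p] × ℤ_[p]) ≃+ (ℤ_[p] × ℤ_[p])) (he : Measurable e) (i j : ℕ) :
    μ (e ⁻¹' (pball p i ×ˢ pball p j)) = ((p:ℝ≥0∞)⁻¹) ^ (i + j) := by
  have hp0 : (p:ℝ≥0∞) ≠ 0 := by exact_mod_cast hp.1.pos.ne'
  have hptop : (p:ℝ≥0∞) ≠ ⊤ := ENNReal.natCast_ne_top p
  have inv_step : ∀ (i j : ℕ), μ (e ⁻¹' (pball p (i+1) ×ˢ pball p j)) =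
      (p:ℝ≥0∞)⁻¹ * μ (e ⁻¹' (pball p i ×ˢ pball p j)) := by
    intro i j
    rw [meas_step μ e he i j, ← mul_assoc, ENNReal.inv_mul_cancel hp0 hptop, one_mul]
  have inv_swap : ∀ (i j : ℕ), μ (e ⁻¹' (pball p i ×ˢ pball p (j+1))) =
      (p:ℝ≥0∞)⁻¹ * μ (e ⁻¹' (pball p i ×ˢ pball p j)) := by
    intro i j
    have h1 : ∀ k l : ℕ, (e.trans AddEquiv.prodComm) ⁻¹' (pball p k ×ˢ pball p l) =
        e ⁻¹' (pball p l ×ˢ pball p k) := by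
      intro k l
      ext z
      simp only [Set.mem_preimage, AddEquiv.coe_trans, Function.comp_apply,
        AddEquiv.coe_prodComm, Prod.fst_swap, Prod.snd_swap, Set.mem_prod]
      tauto
    have key := meas_step μ (e.trans AddEquiv.prodComm) (measurable_swap.comp he) j i
    rw [h1, h1] at key
    rw [key, ← mul_assoc, ENNReal.inv_mul_cancel hp0 hptop, one_mul]
  induction i generalizing j with
  | zero =>
    induction j with
    | zero =>
      simp only [pball_zero, Set.univ_prod_univ, Set.preimage_univ, Nat.add_zero, pow_zero]
      exact measure_univ
    | succ j ihj =>
      rw [inv_swap 0 j, ihj]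
      ring
  | succ i ih =>
    rw [inv_step i j, ih j]
    ring

end Meas

/-- annulus of norm exactly p^{-i} -/
def pann (p : ℕ) [Fact p.Prime] (i : ℕ) : Set ℤ_[p] := pball p i \ pball p (i+1)

lemma measurableSet_pann (i : ℕ) : MeasurableSet (pann p i) :=
  (measurableSet_pball i).diff (measurableSet_pball (i+1))

lemma mem_pann_iff {i : ℕ} {x : ℤ_[p]} : x ∈ pann p i ↔ ‖x‖ = (p:ℝ)^(-(i:ℤ)) := by
  have hcast : (-((i:ℤ)+1) + 1 : ℤ) = -(i:ℤ) := by ring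
  constructor
  · rintro ⟨h1, h2⟩
    have h2' : ¬ ‖x‖ < (p:ℝ)^(-(i:ℤ)) := by
      intro hlt
      apply h2
      rw [mem_pball]
      have := (PadicInt.norm_le_pow_iff_norm_lt_pow_add_one x (-((i:ℤ)+1))).mpr
      push_cast
      exact this (by rw [hcast]; exact hlt)
    exact le_antisymm h1 (not_lt.mp h2')
  · intro h
    refine ⟨le_of_eq h, fun hmem => ?_⟩
    rw [mem_pball] at hmem
    have hlt := (PadicInt.norm_le_pow_iff_norm_lt_pow_add_one x (-((i:ℤ)+1))).mp
      (by push_cast at hmem ⊢; exact hmem)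
    rw [hcast, h] at hlt
    exact lt_irrefl _ hlt

lemma pann_disjoint : Pairwise fun i j : ℕ => Disjoint (pann p i) (pann p j) := by
  intro i j hij
  rw [Set.disjoint_left]
  intro x hxi hxj
  rw [mem_pann_iff] at hxi hxj
  have : (-(i:ℤ)) = (-(j:ℤ)) := by
    have hone : (1:ℝ) < (p:ℝ) := by exact_mod_cast hp.1.one_lt
    have hppos : (0:ℝ) < (p:ℝ) := by positivity
    exact zpow_right_injective₀ hppos hone.ne' (hxi.symm.trans hxj)
  omega

section Meas2
variable (μ : Measure (ℤ_[p] × ℤ_[p])) [IsProbabilityMeasure μ] [μ.IsAddLeftInvariant]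

lemma enn_q_pow (n : ℕ) : ((p:ℝ≥0∞)⁻¹) ^ n = ENNReal.ofReal (((p:ℝ)⁻¹)^n) := by
  have hppos : (0:ℝ) < (p:ℝ) := by exact_mod_cast hp.1.pos
  rw [ENNReal.ofReal_pow (by positivity), ENNReal.ofReal_inv_of_pos hppos,
    ENNReal.ofReal_natCast]

lemma meas_pann_pball (e : (ℤ_[p] × ℤ_[p]) ≃+ (ℤ_[p] × ℤ_[p])) (he : Measurable e) (i j : ℕ) :
    μ (e ⁻¹' (pann p i ×ˢ pball p j)) =
      ENNReal.ofReal (((p:ℝ)⁻¹)^(i+j) - ((p:ℝ)⁻¹)^(i+j+1)) := by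
  have hset : pann p i ×ˢ pball p j = pball p i ×ˢ pball p j \ pball p (i+1) ×ˢ pball p j := by
    ext ⟨x, y⟩
    simp only [pann, Set.mem_prod, Set.mem_diff]
    tauto
  have hsub : e ⁻¹' (pball p (i+1) ×ˢ pball p j) ⊆ e ⁻¹' (pball p i ×ˢ pball p j) :=
    Set.preimage_mono (Set.prod_mono_left (pball_antitone (by omega)))
  rw [hset, Set.preimage_diff,
    measure_diff hsub (he ((measurableSet_pball _).prod (measurableSet_pball _))).nullMeasurableSet
      (measure_ne_top μ _),
    meas_pball_prod μ e he, meas_pball_prod μ e he, enn_q_pow, enn_q_pow,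
    ← ENNReal.ofReal_sub _ (by positivity)]
  congr 1
  ring

lemma meas_pann_pann (e : (ℤ_[p] × ℤ_[p]) ≃+ (ℤ_[p] × ℤ_[p])) (he : Measurable e) (i j : ℕ) :
    μ (e ⁻¹' (pann p i ×ˢ pann p j)) =
      ENNReal.ofReal (((p:ℝ)⁻¹)^(i+j) * (1 - (p:ℝ)⁻¹)^2) := by
  have hq1 : ((p:ℝ)⁻¹) ≤ 1 := by
    rw [inv_le_one_iff₀]; right; exact_mod_cast hp.1.one_lt.le
  have hq0 : (0:ℝ) ≤ (p:ℝ)⁻¹ := by positivity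
  have hset : pann p i ×ˢ pann p j = pann p i ×ˢ pball p j \ pann p i ×ˢ pball p (j+1) := by
    ext ⟨x, y⟩
    simp only [pann, Set.mem_prod, Set.mem_diff]
    tauto
  have hsub : e ⁻¹' (pann p i ×ˢ pball p (j+1)) ⊆ e ⁻¹' (pann p i ×ˢ pball p j) :=
    Set.preimage_mono (Set.prod_mono_right (pball_antitone (by omega)))
  rw [hset, Set.preimage_diff,
    measure_diff hsub (he ((measurableSet_pann _).prod (measurableSet_pball _))).nullMeasurableSet
      (measure_ne_top μ _),
    meas_pann_pball μ e he, meas_pann_pball μ e he,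
    ← ENNReal.ofReal_sub _ (sub_nonneg.mpr (pow_le_pow_of_le_one hq0 hq1 (by omega)))]
  congr 1
  ring

end Meas2

lemma isUnit_two_padic (hp2 : p ≠ 2) : IsUnit (2:ℤ_[p]) := by
  rw [PadicInt.isUnit_iff]
  refine le_antisymm (PadicInt.norm_le_one _) (not_lt.mp fun hlt => ?_)
  have h2 : ((2:ℤ) : ℤ_[p]) = (2:ℤ_[p]) := by norm_cast
  rw [← h2, PadicInt.norm_int_lt_one_iff_dvd] at hlt
  have : (p:ℤ) ∣ (2:ℕ) := by exact_mod_cast hlt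
  rw [Int.natCast_dvd_natCast] at this
  exact hp2 ((Nat.prime_dvd_prime_iff_eq hp.1 Nat.prime_two).mp this)

lemma norm_sq_padic (z : ℤ_[p]) : ‖z^2‖ = ‖z‖^2 := by
  rw [sq, sq, norm_mul]

lemma unit_norm_one (u : ℤ_[p]ˣ) : ‖(u:ℤ_[p])‖ = 1 :=
  PadicInt.isUnit_iff.mp u.isUnit

/-- If `D` is a non-square unit, then `u² - D w²` is a unit for units `u, w`. -/
lemma nonsq_unit_norm (hp2 : p ≠ 2) {D : ℤ_[p]} (hns : ¬ IsSquare D)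
    (u w : ℤ_[p]ˣ) : ‖(u:ℤ_[p])^2 - D * (w:ℤ_[p])^2‖ = 1 := by
  set a : ℤ_[p]ˣ := u * w⁻¹ with ha
  have hw : (w:ℤ_[p]) * ((w⁻¹:ℤ_[p]ˣ):ℤ_[p]) = 1 := by exact_mod_cast w.mul_inv
  have hid : (u:ℤ_[p])^2 - D * (w:ℤ_[p])^2 = (w:ℤ_[p])^2 * ((a:ℤ_[p])^2 - D) := by
    have ha' : (a:ℤ_[p]) = (u:ℤ_[p]) * ((w⁻¹:ℤ_[p]ˣ):ℤ_[p]) := by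
      rw [ha]; exact_mod_cast rfl
    rw [ha']
    linear_combination (-((u:ℤ_[p])^2) * ((w:ℤ_[p]) * ((w⁻¹:ℤ_[p]ˣ):ℤ_[p]) + 1)) * hw
  rw [hid, norm_mul, norm_sq_padic, unit_norm_one, one_pow, one_mul]
  -- now show ‖a² - D‖ = 1
  refine le_antisymm (PadicInt.norm_le_one _) (not_lt.mp fun hlt => ?_)
  have hF : ∃ z : ℤ_[p], z^2 - D = 0 := by
    have hnorm : ‖(Polynomial.X^2 - Polynomial.C D).eval (a:ℤ_[p])‖ <
        ‖(Polynomial.X^2 - Polynomial.C D).derivative.eval (a:ℤ_[p])‖^2 := by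
      have hev : (Polynomial.X^2 - Polynomial.C D).eval (a:ℤ_[p]) = (a:ℤ_[p])^2 - D := by
        simp
      have hder : (Polynomial.X^2 - Polynomial.C D).derivative.eval (a:ℤ_[p]) =
          2 * (a:ℤ_[p]) := by
        simp [Polynomial.derivative_sub, Polynomial.derivative_X_pow, one_add_one_eq_two]
      rw [hev, hder, norm_mul]
      rw [PadicInt.isUnit_iff.mp (isUnit_two_padic hp2), unit_norm_one, one_mul, one_pow]
      exact hlt
    obtain ⟨z, hz, -⟩ := hensels_lemma hnorm
    exact ⟨z, by simpa using hz⟩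
  obtain ⟨z, hz⟩ := hF
  exact hns ⟨z, by linear_combination -hz⟩

/-- norm of the non-split quadratic form -/
lemma nonsq_form_norm (hp2 : p ≠ 2) {D : ℤ_[p]} (hD : IsUnit D) (hns : ¬ IsSquare D)
    (x y : ℤ_[p]) : ‖x^2 - D*y^2‖ = (max ‖x‖ ‖y‖)^2 := by
  have hDn : ‖D‖ = 1 := PadicInt.isUnit_iff.mp hD
  rcases lt_trichotomy ‖x‖ ‖y‖ with h | h | h
  · have hne : ‖x^2‖ ≠ ‖-(D*y^2)‖ := by
      rw [norm_neg, norm_mul, hDn, one_mul, norm_sq_padic, norm_sq_padic]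
      exact ne_of_lt (by nlinarith [norm_nonneg x, norm_nonneg y])
    have := PadicInt.norm_add_eq_max_of_ne hne
    rw [← sub_eq_add_neg] at this
    rw [this, norm_neg, norm_mul, hDn, one_mul, norm_sq_padic, norm_sq_padic,
      max_eq_right h.le]
    rw [max_eq_right (by nlinarith [norm_nonneg x, norm_nonneg y] : ‖x‖^2 ≤ ‖y‖^2)]
  · by_cases hx0 : x = 0
    · have hy0 : y = 0 := by
        have : ‖y‖ = 0 := by rw [← h, hx0, norm_zero]
        exact norm_eq_zero.mp this
      subst hx0; subst hy0
      simp
    · have hy0 : y ≠ 0 := by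
        intro hy
        apply hx0
        apply norm_eq_zero.mp
        rw [h, hy, norm_zero]
      have hux := PadicInt.unitCoeff_spec hx0
      have huy := PadicInt.unitCoeff_spec hy0
      have hmn : x.valuation = y.valuation := by
        have h1 := PadicInt.norm_eq_zpow_neg_valuation hx0
        have h2 := PadicInt.norm_eq_zpow_neg_valuation hy0
        rw [h1, h2] at h
        have hone : (1:ℝ) < (p:ℝ) := by exact_mod_cast hp.1.one_lt
        have hppos : (0:ℝ) < (p:ℝ) := by positivity
        have heq := zpow_right_injective₀ hppos hone.ne' h
        have heq2 : -(x.valuation:ℤ) = -(y.valuation:ℤ) := heq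
        omega
      have hform : x^2 - D*y^2 = ((p:ℤ_[p])^(x.valuation))^2 *
          (((PadicInt.unitCoeff hx0):ℤ_[p])^2 - D*((PadicInt.unitCoeff hy0):ℤ_[p])^2) := by
        conv_lhs => rw [hux, huy]
        rw [hmn]
        ring
      rw [hform, norm_mul, nonsq_unit_norm hp2 hns, mul_one, norm_sq_padic,
        PadicInt.norm_p_pow]
      have hxnorm : ‖x‖ = (p:ℝ)^(-(x.valuation:ℤ)) :=
        PadicInt.norm_eq_zpow_neg_valuation hx0
      rw [← h, max_self, hxnorm]
  · have hne : ‖x^2‖ ≠ ‖-(D*y^2)‖ := by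
      rw [norm_neg, norm_mul, hDn, one_mul, norm_sq_padic, norm_sq_padic]
      exact ne_of_gt (by nlinarith [norm_nonneg x, norm_nonneg y])
    have := PadicInt.norm_add_eq_max_of_ne hne
    rw [← sub_eq_add_neg] at this
    rw [this, norm_neg, norm_mul, hDn, one_mul, norm_sq_padic, norm_sq_padic,
      max_eq_left h.le]
    rw [max_eq_left (by nlinarith [norm_nonneg x, norm_nonneg y] : ‖y‖^2 ≤ ‖x‖^2)]

lemma exists_pann {x : ℤ_[p]} (hx : x ≠ 0) : ∃ i : ℕ, x ∈ pann p i := by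
  refine ⟨x.valuation, ?_⟩
  rw [mem_pann_iff, PadicInt.norm_eq_zpow_neg_valuation hx]

lemma zpow_neg_natCast_eq (i : ℕ) : (p:ℝ)^(-(i:ℤ)) = ((p:ℝ)⁻¹)^i := by
  rw [zpow_neg, zpow_natCast, inv_pow]

lemma rpow_helper (s : ℝ) (i : ℕ) :
    ((p:ℝ)⁻¹)^i * (((p:ℝ)⁻¹)^i)^s = ((p:ℝ)^(-1-s : ℝ))^i := by
  have hp0 : (0:ℝ) < (p:ℝ) := by exact_mod_cast hp.1.pos
  have h1 : ((p:ℝ)⁻¹)^i = (p:ℝ) ^ (-(i:ℝ)) := by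
    rw [← Real.rpow_natCast ((p:ℝ)⁻¹) i, Real.inv_rpow hp0.le, ← Real.rpow_neg hp0.le]
  have h2 : ((p:ℝ)^(-1-s:ℝ))^i = (p:ℝ) ^ ((-1-s)*(i:ℝ)) := by
    rw [← Real.rpow_natCast ((p:ℝ)^(-1-s:ℝ)) i, ← Real.rpow_mul hp0.le]
  rw [h1, h2, ← Real.rpow_mul hp0.le, ← Real.rpow_add hp0]
  congr 1
  ring

lemma tsum_geom_ofReal (c t : ℝ) (hc : 0 ≤ c) (ht0 : 0 ≤ t) (ht1 : t < 1) :
    ∑' i : ℕ, ENNReal.ofReal (c * t^i) = ENNReal.ofReal (c * (1-t)⁻¹) := by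
  rw [← ENNReal.ofReal_tsum_of_nonneg (fun n => mul_nonneg hc (pow_nonneg ht0 n))
    ((summable_geometric_of_lt_one ht0 ht1).mul_left c), tsum_mul_left,
    tsum_geometric_of_lt_one ht0 ht1]

section Main
variable (μ : Measure (ℤ_[p] × ℤ_[p])) [IsProbabilityMeasure μ] [μ.IsAddLeftInvariant]

lemma null_of_le_inv_pow {S : Set (ℤ_[p] × ℤ_[p])}
    (h : ∀ n : ℕ, μ S ≤ ((p:ℝ≥0∞)⁻¹)^n) : μ S = 0 := by
  have hlt : (p:ℝ≥0∞)⁻¹ < 1 := by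
    rw [ENNReal.inv_lt_one]
    exact_mod_cast hp.1.one_lt
  exact le_antisymm
    (ge_of_tendsto' (ENNReal.tendsto_pow_atTop_nhds_zero_of_lt_one hlt) h) zero_le

lemma lintegral_sq_case (hp2 : p ≠ 2) {D : ℤ_[p]} (c : ℤ_[p]) (hc : IsUnit c)
    (hDc : D = c * c) (s : ℝ) (hs : 0 < s) :
    ∫⁻ z : ℤ_[p] × ℤ_[p], ENNReal.ofReal (‖z.1^2 - D*z.2^2‖ ^ s) ∂μ =
      ENNReal.ofReal ((1 - (p:ℝ)⁻¹) * (1 - (p:ℝ)^(-1-s : ℝ))⁻¹) ^ 2 := by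
  have hp0 : (0:ℝ) < (p:ℝ) := by exact_mod_cast hp.1.pos
  have hp1 : (1:ℝ) < (p:ℝ) := by exact_mod_cast hp.1.one_lt
  have hq0 : (0:ℝ) ≤ (p:ℝ)⁻¹ := by positivity
  have hq1 : (p:ℝ)⁻¹ < 1 := by
    rw [inv_lt_one_iff₀]; right; exact hp1
  obtain ⟨d, hd⟩ := hc.exists_right_inv
  obtain ⟨t2, ht2⟩ := (isUnit_two_padic hp2).exists_right_inv
  set e : (ℤ_[p] × ℤ_[p]) ≃+ (ℤ_[p] × ℤ_[p]) :=
    { toFun := fun z => (z.1 - c*z.2, z.1 + c*z.2)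
      invFun := fun w => (t2*(w.1+w.2), t2*d*(w.2-w.1))
      left_inv := by
        intro z
        refine Prod.ext ?_ ?_
        · show t2*((z.1 - c*z.2) + (z.1 + c*z.2)) = z.1
          linear_combination z.1 * ht2
        · show t2*d*((z.1 + c*z.2) - (z.1 - c*z.2)) = z.2
          linear_combination (z.2*c*d) * ht2 + z.2 * hd
      right_inv := by
        intro w
        refine Prod.ext ?_ ?_
        · show t2*(w.1+w.2) - c*(t2*d*(w.2-w.1)) = w.1
          linear_combination w.1 * ht2 + t2*(w.1-w.2) * hd
        · show t2*(w.1+w.2) + c*(t2*d*(w.2-w.1)) = w.2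
          linear_combination w.2 * ht2 + t2*(w.2-w.1) * hd
      map_add' := by
        intro a b
        refine Prod.ext ?_ ?_ <;> · show _ = _; dsimp; ring } with he_def
  have he : Measurable ⇑e := by
    have : Continuous fun z : ℤ_[p] × ℤ_[p] => (z.1 - c*z.2, z.1 + c*z.2) := by fun_prop
    exact this.measurable
  have hez : ∀ z : ℤ_[p] × ℤ_[p], e z = (z.1 - c*z.2, z.1 + c*z.2) := fun z => rfl
  set P : ℕ × ℕ → Set (ℤ_[p] × ℤ_[p]) :=
    fun ij => ⇑e ⁻¹' (pann p ij.1 ×ˢ pann p ij.2) with hP_def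
  have hPm : ∀ ij, MeasurableSet (P ij) :=
    fun ij => he ((measurableSet_pann _).prod (measurableSet_pann _))
  have hPd : Pairwise (Function.onFun Disjoint P) := by
    intro a b hne
    refine Disjoint.preimage _ (Set.disjoint_left.mpr fun z hz1 hz2 => ?_)
    by_cases hfst : a.1 = b.1
    · have hsnd : a.2 ≠ b.2 := fun h2 => hne (Prod.ext hfst h2)
      exact Set.disjoint_left.mp (pann_disjoint hsnd) hz1.2 hz2.2
    · exact Set.disjoint_left.mp (pann_disjoint hfst) hz1.1 hz2.1
  have hN : ∀ T : Set (ℤ_[p] × ℤ_[p]),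
      (∀ n : ℕ, T ⊆ pball p n ×ˢ pball p 0 ∨ T ⊆ pball p 0 ×ˢ pball p n) →
      μ (⇑e ⁻¹' T) = 0 := by
    intro T hT
    apply null_of_le_inv_pow
    intro n
    rcases hT n with h | h
    · have hle : μ (⇑e ⁻¹' T) ≤ μ (⇑e ⁻¹' (pball p n ×ˢ pball p 0)) :=
        measure_mono (Set.preimage_mono h)
      rw [meas_pball_prod μ e he n 0] at hle
      simpa using hle
    · have hle : μ (⇑e ⁻¹' T) ≤ μ (⇑e ⁻¹' (pball p 0 ×ˢ pball p n)) :=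
        measure_mono (Set.preimage_mono h)
      rw [meas_pball_prod μ e he 0 n] at hle
      simpa using hle
  have hcompl : μ (Set.univ \ ⋃ ij, P ij) = 0 := by
    have hsub : Set.univ \ ⋃ ij, P ij ⊆
        (⇑e ⁻¹' {w : ℤ_[p] × ℤ_[p] | w.1 = 0}) ∪ (⇑e ⁻¹' {w : ℤ_[p] × ℤ_[p] | w.2 = 0}) := by
      rintro z ⟨-, hz⟩
      simp only [Set.mem_iUnion, not_exists] at hz
      by_contra hcon
      simp only [Set.mem_union, Set.mem_preimage, Set.mem_setOf_eq] at hcon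
      push_neg at hcon
      obtain ⟨i, hi⟩ := exists_pann hcon.1
      obtain ⟨j, hj⟩ := exists_pann hcon.2
      exact hz (i, j) (Set.mem_preimage.mpr ⟨hi, hj⟩)
    refine measure_mono_null hsub (le_antisymm (le_trans (measure_union_le _ _) ?_) zero_le)
    rw [hN _ (fun n => Or.inl fun w hw => ⟨by
        rw [Set.mem_setOf_eq] at hw
        rw [mem_pball, hw, norm_zero]
        exact zpow_nonneg (by positivity) _, PadicInt.norm_le_one _⟩),
      hN _ (fun n => Or.inr fun w hw => ⟨PadicInt.norm_le_one _, by
        rw [Set.mem_setOf_eq] at hw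
        rw [mem_pball, hw, norm_zero]
        exact zpow_nonneg (by positivity) _⟩)]
    simp
  have haeq : (⋃ ij, P ij) =ᵐ[μ] (Set.univ : Set (ℤ_[p] × ℤ_[p])) := by
    rw [MeasureTheory.ae_eq_univ, Set.compl_eq_univ_diff]
    exact hcompl
  calc ∫⁻ z : ℤ_[p] × ℤ_[p], ENNReal.ofReal (‖z.1^2 - D*z.2^2‖ ^ s) ∂μ
      = ∫⁻ z in ⋃ ij, P ij, ENNReal.ofReal (‖z.1^2 - D*z.2^2‖ ^ s) ∂μ := by
        rw [← setLIntegral_univ]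
        exact (setLIntegral_congr haeq).symm
    _ = ∑' ij : ℕ × ℕ, ∫⁻ z in P ij, ENNReal.ofReal (‖z.1^2 - D*z.2^2‖ ^ s) ∂μ :=
        lintegral_iUnion hPm hPd _
    _ = ∑' ij : ℕ × ℕ, ENNReal.ofReal ((1 - (p:ℝ)⁻¹) * ((p:ℝ)^(-1-s:ℝ))^ij.1) *
          ENNReal.ofReal ((1 - (p:ℝ)⁻¹) * ((p:ℝ)^(-1-s:ℝ))^ij.2) := by
        apply tsum_congr
        intro ij
        have hval : ∀ z ∈ P ij, ENNReal.ofReal (‖z.1^2 - D*z.2^2‖ ^ s) =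
            ENNReal.ofReal (((((p:ℝ)⁻¹)^ij.1) * (((p:ℝ)⁻¹)^ij.2)) ^ s) := by
          intro z hz
          have hz1 : (e z).1 ∈ pann p ij.1 := hz.1
          have hz2 : (e z).2 ∈ pann p ij.2 := hz.2
          have hform : z.1^2 - D*z.2^2 = (z.1 - c*z.2) * (z.1 + c*z.2) := by
            rw [hDc]; ring
          congr 1
          rw [hform]
          have h1 : ‖z.1 - c*z.2‖ = ((p:ℝ)⁻¹)^ij.1 := by
            have := mem_pann_iff.mp hz1
            rw [hez] at this
            rw [this]
            exact zpow_neg_natCast_eq _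
          have h2 : ‖z.1 + c*z.2‖ = ((p:ℝ)⁻¹)^ij.2 := by
            have := mem_pann_iff.mp hz2
            rw [hez] at this
            rw [this]
            exact zpow_neg_natCast_eq _
          rw [norm_mul, h1, h2]
        rw [setLIntegral_congr_fun (hPm ij) hval,
          MeasureTheory.setLIntegral_const, hP_def, meas_pann_pann μ e he,
          ← ENNReal.ofReal_mul (by positivity),
          ← ENNReal.ofReal_mul (mul_nonneg (by linarith : (0:ℝ) ≤ 1 - (p:ℝ)⁻¹)
            (pow_nonneg (Real.rpow_nonneg hp0.le _) _))]
        congr 1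
        rw [← rpow_helper s ij.1, ← rpow_helper s ij.2,
          Real.mul_rpow (by positivity) (by positivity), pow_add]
        ring
    _ = (∑' i : ℕ, ENNReal.ofReal ((1 - (p:ℝ)⁻¹) * ((p:ℝ)^(-1-s:ℝ))^i)) ^ 2 := by
        rw [ENNReal.tsum_prod']
        simp only [ENNReal.tsum_mul_left]
        rw [ENNReal.tsum_mul_right, sq]
    _ = ENNReal.ofReal ((1 - (p:ℝ)⁻¹) * (1 - (p:ℝ)^(-1-s:ℝ))⁻¹) ^ 2 := by
        rw [tsum_geom_ofReal _ _ (by linarith) (Real.rpow_nonneg hp0.le _)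
          (Real.rpow_lt_one_of_one_lt_of_neg hp1 (by linarith))]
end Main

section Main2
variable (μ : Measure (ℤ_[p] × ℤ_[p])) [IsProbabilityMeasure μ] [μ.IsAddLeftInvariant]

lemma meas_pball_prod_id (i j : ℕ) : μ (pball p i ×ˢ pball p j) = ((p:ℝ≥0∞)⁻¹)^(i+j) := by
  have h := meas_pball_prod μ (AddEquiv.refl _) measurable_id i j
  simpa using h

lemma meas_box_ann (k : ℕ) :
    μ ((pball p k ×ˢ pball p k) \ (pball p (k+1) ×ˢ pball p (k+1))) =
      ENNReal.ofReal (((p:ℝ)⁻¹)^(k+k) * (1 - ((p:ℝ)⁻¹)^2)) := by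
  have hq0 : (0:ℝ) ≤ (p:ℝ)⁻¹ := by positivity
  have hq1 : ((p:ℝ)⁻¹) ≤ 1 := by
    rw [inv_le_one_iff₀]; right; exact_mod_cast hp.1.one_lt.le
  rw [measure_diff
      (Set.prod_mono (pball_antitone (Nat.le_succ k)) (pball_antitone (Nat.le_succ k)))
      ((measurableSet_pball _).prod (measurableSet_pball _)).nullMeasurableSet
      (measure_ne_top μ _),
    meas_pball_prod_id μ, meas_pball_prod_id μ, enn_q_pow, enn_q_pow,
    ← ENNReal.ofReal_sub _ (by positivity)]
  congr 1
  rw [show k+1+(k+1) = (k+k)+2 from by omega, pow_add]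
  ring

lemma lintegral_nonsq_case (hp2 : p ≠ 2) {D : ℤ_[p]} (hD : IsUnit D) (hns : ¬ IsSquare D)
    (s : ℝ) (hs : 0 < s) :
    ∫⁻ z : ℤ_[p] × ℤ_[p], ENNReal.ofReal (‖z.1^2 - D*z.2^2‖ ^ s) ∂μ =
      ENNReal.ofReal ((1 - ((p:ℝ)⁻¹)^2) * (1 - ((p:ℝ)^(-1-s:ℝ))^2)⁻¹) := by
  classical
  have hp0 : (0:ℝ) < (p:ℝ) := by exact_mod_cast hp.1.pos
  have hp1 : (1:ℝ) < (p:ℝ) := by exact_mod_cast hp.1.one_lt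
  have hq0 : (0:ℝ) ≤ (p:ℝ)⁻¹ := by positivity
  have hq1 : (p:ℝ)⁻¹ < 1 := by rw [inv_lt_one_iff₀]; right; exact hp1
  have ht0 : (0:ℝ) ≤ (p:ℝ)^(-1-s:ℝ) := Real.rpow_nonneg hp0.le _
  have ht1 : (p:ℝ)^(-1-s:ℝ) < 1 := Real.rpow_lt_one_of_one_lt_of_neg hp1 (by linarith)
  set C : ℕ → Set (ℤ_[p] × ℤ_[p]) :=
    fun k => (pball p k ×ˢ pball p k) \ (pball p (k+1) ×ˢ pball p (k+1)) with hC_def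
  have hCm : ∀ k, MeasurableSet (C k) := fun k =>
    ((measurableSet_pball _).prod (measurableSet_pball _)).diff
      ((measurableSet_pball _).prod (measurableSet_pball _))
  have hCd : Pairwise (Function.onFun Disjoint C) := by
    have key : ∀ k l : ℕ, k < l → Disjoint (C k) (C l) := by
      intro k l hkl
      refine Set.disjoint_left.mpr fun z hz1 hz2 => hz1.2 ?_
      exact Set.prod_mono (pball_antitone (by omega)) (pball_antitone (by omega)) hz2.1
    intro k l hkl
    rcases lt_or_gt_of_ne hkl with h | h
    · exact key k l h
    · exact (key l k h).symm
  have hcompl : μ (Set.univ \ ⋃ k, C k) = 0 := by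
    have hsub : Set.univ \ ⋃ k, C k ⊆ ⋂ n : ℕ, pball p n ×ˢ pball p n := by
      rintro z ⟨-, hz⟩
      simp only [Set.mem_iUnion, not_exists] at hz
      rw [Set.mem_iInter]
      by_contra hcon
      push_neg at hcon
      obtain ⟨n0, hn0⟩ := hcon
      have hQ : ∃ n, z ∉ pball p (n+1) ×ˢ pball p (n+1) := by
        refine ⟨n0, fun hmem => hn0 ?_⟩
        exact Set.prod_mono (pball_antitone (Nat.le_succ n0)) (pball_antitone (Nat.le_succ n0)) hmem
      have hspec := Nat.find_spec hQ
      have hmem : z ∈ pball p (Nat.find hQ) ×ˢ pball p (Nat.find hQ) := by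
        rcases Nat.eq_zero_or_pos (Nat.find hQ) with h0 | h0
        · rw [h0, pball_zero]
          exact ⟨trivial, trivial⟩
        · have hlt : Nat.find hQ - 1 < Nat.find hQ := by omega
          have hmm := Nat.find_min hQ hlt
          have heq : Nat.find hQ - 1 + 1 = Nat.find hQ := by omega
          rw [heq] at hmm
          exact not_not.mp hmm
      exact hz (Nat.find hQ) ⟨hmem, hspec⟩
    apply measure_mono_null hsub
    apply null_of_le_inv_pow
    intro n
    have hle : μ (⋂ m : ℕ, pball p m ×ˢ pball p m) ≤ μ (pball p n ×ˢ pball p n) :=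
      measure_mono (Set.iInter_subset _ n)
    rw [meas_pball_prod_id μ n n] at hle
    refine hle.trans ?_
    calc ((p:ℝ≥0∞)⁻¹)^(n+n) = ((p:ℝ≥0∞)⁻¹)^n * ((p:ℝ≥0∞)⁻¹)^n := pow_add _ n n
      _ ≤ 1 * ((p:ℝ≥0∞)⁻¹)^n := by
          gcongr
          exact pow_le_one' (ENNReal.inv_le_one.mpr (by exact_mod_cast hp.1.one_le)) n
      _ = ((p:ℝ≥0∞)⁻¹)^n := one_mul _
  have haeq : (⋃ k, C k) =ᵐ[μ] (Set.univ : Set (ℤ_[p] × ℤ_[p])) := by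
    rw [MeasureTheory.ae_eq_univ, Set.compl_eq_univ_diff]
    exact hcompl
  calc ∫⁻ z : ℤ_[p] × ℤ_[p], ENNReal.ofReal (‖z.1^2 - D*z.2^2‖ ^ s) ∂μ
      = ∫⁻ z in ⋃ k, C k, ENNReal.ofReal (‖z.1^2 - D*z.2^2‖ ^ s) ∂μ := by
        rw [← setLIntegral_univ]
        exact (setLIntegral_congr haeq).symm
    _ = ∑' k : ℕ, ∫⁻ z in C k, ENNReal.ofReal (‖z.1^2 - D*z.2^2‖ ^ s) ∂μ :=
        lintegral_iUnion hCm hCd _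
    _ = ∑' k : ℕ, ENNReal.ofReal ((1 - ((p:ℝ)⁻¹)^2) * (((p:ℝ)^(-1-s:ℝ))^2)^k) := by
        apply tsum_congr
        intro k
        have hval : ∀ z ∈ C k, ENNReal.ofReal (‖z.1^2 - D*z.2^2‖ ^ s) =
            ENNReal.ofReal ((((((p:ℝ)⁻¹)^k)^2)) ^ s) := by
          intro z hz
          obtain ⟨⟨hz1, hz2⟩, hz3⟩ := hz
          have hz3' : z.1 ∉ pball p (k+1) ∨ z.2 ∉ pball p (k+1) := by
            by_contra hcc
            push_neg at hcc
            exact hz3 ⟨hcc.1, hcc.2⟩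
          have hmax : max ‖z.1‖ ‖z.2‖ = ((p:ℝ)⁻¹)^k := by
            have hub : max ‖z.1‖ ‖z.2‖ ≤ ((p:ℝ)⁻¹)^k := by
              rw [← zpow_neg_natCast_eq]
              exact max_le hz1 hz2
            refine le_antisymm hub ?_
            rcases hz3' with h | h
            · calc ((p:ℝ)⁻¹)^k = ‖z.1‖ := by
                    rw [mem_pann_iff.mp ⟨hz1, h⟩, zpow_neg_natCast_eq]
                _ ≤ max ‖z.1‖ ‖z.2‖ := le_max_left _ _
            · calc ((p:ℝ)⁻¹)^k = ‖z.2‖ := by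
                    rw [mem_pann_iff.mp ⟨hz2, h⟩, zpow_neg_natCast_eq]
                _ ≤ max ‖z.1‖ ‖z.2‖ := le_max_right _ _
          congr 1
          rw [nonsq_form_norm hp2 hD hns z.1 z.2, hmax]
        rw [setLIntegral_congr_fun (hCm k) hval, hC_def,
          MeasureTheory.setLIntegral_const, meas_box_ann μ,
          ← ENNReal.ofReal_mul (by positivity)]
        congr 1
        have hsq : (((((p:ℝ)⁻¹)^k)^2) : ℝ) ^ s = ((((p:ℝ)⁻¹)^k) ^ s)^2 := by
          rw [sq, Real.mul_rpow (by positivity) (by positivity), sq]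
        rw [show (((p:ℝ)^(-1-s:ℝ)) ^ 2) ^ k = (((p:ℝ)^(-1-s:ℝ))^k)^2 from by ring,
          ← rpow_helper s k, hsq]
        ring
    _ = ENNReal.ofReal ((1 - ((p:ℝ)⁻¹)^2) * (1 - ((p:ℝ)^(-1-s:ℝ))^2)⁻¹) := by
        apply tsum_geom_ofReal
        · nlinarith
        · positivity
        · nlinarith
end Main2


end IgusaAux

/-- For an odd prime `p` and a unit `D ∈ ℤ_p^×`, Igusa's local zeta function of
`f(x₁,x₂) = x₁² − D x₂²` equals
`((1-p⁻¹)/(1-p^{-1-s})) · ((1 − χ p⁻¹)/(1 − χ p^{-1-s}))`, where `χ = 1` if `D` is a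
square and `χ = −1` otherwise. -/
theorem igusa_zeta_binary_form (hp : p ≠ 2) (D : ℤ_[p]) (hD : IsUnit D)
    (μ : Measure (ℤ_[p] × ℤ_[p])) [IsProbabilityMeasure μ] [μ.IsAddLeftInvariant]
    (s : ℝ) (hs : 0 < s) :
    (∫ z : ℤ_[p] × ℤ_[p], ‖z.1 ^ 2 - D * z.2 ^ 2‖ ^ s ∂μ) =
      ((1 - (p : ℝ)⁻¹) / (1 - (p : ℝ) ^ (-1 - s))) *
        ((1 - (if IsSquare D then (1 : ℝ) else -1) * (p : ℝ)⁻¹) /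
          (1 - (if IsSquare D then (1 : ℝ) else -1) * (p : ℝ) ^ (-1 - s))) := by
  
  have hp2 := hp
  have hp0 : (0:ℝ) < (p:ℝ) := by exact_mod_cast Fact.out (p := p.Prime) |>.pos
  have hp1 : (1:ℝ) < (p:ℝ) := by exact_mod_cast Fact.out (p := p.Prime) |>.one_lt
  have hq1 : (p:ℝ)⁻¹ < 1 := by rw [inv_lt_one_iff₀]; right; exact hp1
  have hq0 : (0:ℝ) ≤ (p:ℝ)⁻¹ := by positivity
  have ht0 : (0:ℝ) ≤ (p:ℝ)^(-1-s:ℝ) := Real.rpow_nonneg hp0.le _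
  have ht1 : (p:ℝ)^(-1-s:ℝ) < 1 := Real.rpow_lt_one_of_one_lt_of_neg hp1 (by linarith)
  have hconv : (∫ z : ℤ_[p] × ℤ_[p], ‖z.1 ^ 2 - D * z.2 ^ 2‖ ^ s ∂μ) =
      (∫⁻ z : ℤ_[p] × ℤ_[p], ENNReal.ofReal (‖z.1^2 - D*z.2^2‖ ^ s) ∂μ).toReal := by
    rw [integral_eq_lintegral_of_nonneg_ae]
    · exact Filter.Eventually.of_forall fun z => Real.rpow_nonneg (norm_nonneg _) s
    · exact (Continuous.rpow_const (by fun_prop) (fun z => Or.inr hs.le)).aestronglyMeasurable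
  by_cases hsq : IsSquare D
  · obtain ⟨c, hDc⟩ := hsq
    have hc : IsUnit c := by
      rw [hDc] at hD
      exact isUnit_of_mul_isUnit_left hD
    rw [hconv, lintegral_sq_case μ hp2 c hc hDc s hs, if_pos ⟨c, hDc⟩]
    rw [ENNReal.toReal_pow, ENNReal.toReal_ofReal
      (mul_nonneg (by linarith) (inv_nonneg.mpr (by linarith)))]
    have h1t : (1:ℝ) - (p:ℝ)^(-1-s:ℝ) ≠ 0 := by linarith
    field_simp
  · rw [hconv, lintegral_nonsq_case μ hp2 hD hsq s hs, if_neg hsq]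
    rw [ENNReal.toReal_ofReal (mul_nonneg (by nlinarith) (inv_nonneg.mpr (by nlinarith)))]
    have e1 : (1:ℝ) - (-1)*(p:ℝ)⁻¹ = 1 + (p:ℝ)⁻¹ := by ring
    have e2 : (1:ℝ) - (-1)*(p:ℝ)^(-1-s:ℝ) = 1 + (p:ℝ)^(-1-s:ℝ) := by ring
    rw [e1, e2, div_mul_div_comm, div_eq_mul_inv]
    congr 1
    · ring
    · congr 1
      ring
end
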